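/- arXiv:0909.3942 — 8 statements merged into one kernel-verified Lean document; each statement's English description precedes it below -/
import Mathlib

section
/- Let K be a field and r ≥ 2 an integer prime to char(K). If PGL₂(K) contains an element of order r, then K contains ζ + ζ⁻¹ for some primitive r-th root of unity ζ in a separable closure of K. -/
open Matrix

/-- `PGL₂(K)`: the projective general linear group, `GL₂(K)` modulo its center
(the scalar matrices). -/
abbrev PGL2 (K : Type*) [Field K] :=
  GL (Fin 2) K ⧸ Subgroup.center (GL (Fin 2) K)

/-- Membership in the center of `GL (Fin 2) K` is being a scalar matrix. -/
lemma gl2_mem_center_iff {K : Type*} [Field K] {A : GL (Fin 2) K} :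
    A ∈ Subgroup.center (GL (Fin 2) K) ↔
      ∃ c : K, (A : Matrix (Fin 2) (Fin 2) K) = c • (1 : Matrix (Fin 2) (Fin 2) K) := by
  constructor
  · intro hA
    have hcomm : ∀ t : TransvectionStruct (Fin 2) K,
        Commute t.toMatrix (A : Matrix (Fin 2) (Fin 2) K) := by
      intro t
      have hdet : IsUnit t.toMatrix.det := by simp [t.det]
      obtain ⟨u, hu⟩ := (Matrix.isUnit_iff_isUnit_det _).mpr hdet
      have h2 := Subgroup.mem_center_iff.mp hA u
      have h3 : (u * A).val = (A * u).val := by rw [h2]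
      simpa only [Units.val_mul, hu, Commute, SemiconjBy] using h3
    obtain ⟨c, hc⟩ := Matrix.mem_range_scalar_of_commute_transvectionStruct hcomm
    refine ⟨c, ?_⟩
    rw [← hc, Matrix.scalar_apply, smul_one_eq_diagonal]
  · rintro ⟨c, hc⟩
    refine Subgroup.mem_center_iff.mpr fun B => ?_
    ext1
    simp only [Units.val_mul, hc, Matrix.mul_smul, Matrix.smul_mul, Matrix.mul_one,
      Matrix.one_mul]

/-- Coefficient sequence for powers of a `2 × 2` matrix with trace `t` and determinant `d`. -/
def glSeq {L : Type*} [Field L] (t d : L) : ℕ → L × L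
  | 0 => (0, 1)
  | n + 1 => ((glSeq t d n).1 * t + (glSeq t d n).2, -((glSeq t d n).1 * d))

lemma gl2_sq {L : Type*} [Field L] (m : Matrix (Fin 2) (Fin 2) L) :
    m * m = (m 0 0 + m 1 1) • m - (m 0 0 * m 1 1 - m 0 1 * m 1 0) • 1 := by
  ext i j
  fin_cases i <;> fin_cases j <;>
    simp [Matrix.mul_apply, Fin.sum_univ_succ, Matrix.one_apply] <;> ring

lemma gl2_pow {L : Type*} [Field L] (m : Matrix (Fin 2) (Fin 2) L) (t d : L)
    (h : m * m = t • m - d • (1 : Matrix (Fin 2) (Fin 2) L)) (n : ℕ) :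
    m ^ n = (glSeq t d n).1 • m + (glSeq t d n).2 • 1 := by
  induction n with
  | zero => simp [glSeq]
  | succ n ih =>
    rw [pow_succ, ih, glSeq]
    rw [Matrix.add_mul, Matrix.smul_mul, Matrix.smul_mul, Matrix.one_mul, h]
    module

lemma gl2_root_pow {L : Type*} [Field L] (t d lam : L) (h : lam * lam = t * lam - d) (n : ℕ) :
    lam ^ n = (glSeq t d n).1 * lam + (glSeq t d n).2 := by
  induction n with
  | zero => simp [glSeq]
  | succ n ih =>
    rw [pow_succ, ih, glSeq]
    linear_combination lam * ih - ih * lam + (glSeq t d n).1 * h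

lemma gl2_double_root {L : Type*} [Field L] (t d lam : L) (ht : t = 2 * lam)
    (hd : d = lam * lam) (n : ℕ) :
    (glSeq t d n).1 * lam = n * lam ^ n ∧ (glSeq t d n).2 = lam ^ n - n * lam ^ n := by
  induction n with
  | zero => simp [glSeq]
  | succ n ih =>
    obtain ⟨h1, h2⟩ := ih
    constructor
    · show ((glSeq t d n).1 * t + (glSeq t d n).2) * lam = _
      push_cast
      linear_combination (2 * lam : L) * h1 + lam * h2 + (glSeq t d n).1 * lam * ht
    · show -((glSeq t d n).1 * d) = _
      push_cast
      linear_combination -(glSeq t d n).1 * hd - lam * h1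

/-- If `r ≥ 2` is prime to `char K` and `PGL₂(K)` contains an element of order `r`,
then `K` contains `ζ + ζ⁻¹` for some primitive `r`-th root of unity `ζ` in a separable
closure of `K`. -/
theorem order_r_element_implies_trace_of_primitive_root
    (K : Type*) [Field K] (r : ℕ) (hr : 2 ≤ r) (hchar : (r : K) ≠ 0)
    (h : ∃ x : PGL2 K, orderOf x = r) :
    ∃ ζ : separableClosure K (AlgebraicClosure K),
      IsPrimitiveRoot ζ r ∧
      ∃ l : K, algebraMap K (separableClosure K (AlgebraicClosure K)) l = ζ + ζ⁻¹ := by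
  classical
  obtain ⟨x, hx⟩ := h
  obtain ⟨A, rfl⟩ := QuotientGroup.mk_surjective x
  set L := AlgebraicClosure K with hL
  set f : K →+* L := algebraMap K L with hf_def
  have hf : Function.Injective f := f.injective
  set M : Matrix (Fin 2) (Fin 2) K := (A : Matrix (Fin 2) (Fin 2) K) with hM_def
  set m : Matrix (Fin 2) (Fin 2) L := M.map f with hm_def
  have hmap_pow : ∀ k : ℕ, m ^ k = (M ^ k).map f := by
    intro k
    rw [hm_def, ← RingHom.mapMatrix_apply, ← RingHom.mapMatrix_apply, ← map_pow]
  set tK : K := M 0 0 + M 1 1 with htK_def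
  set dK : K := M 0 0 * M 1 1 - M 0 1 * M 1 0 with hdK_def
  set t : L := f tK with ht_def
  set d : L := f dK with hd_def
  have hm_app : ∀ i j, m i j = f (M i j) := fun i j => rfl
  have hCH : m * m = t • m - d • (1 : Matrix (Fin 2) (Fin 2) L) := by
    have h0 := gl2_sq m
    rw [h0, hm_app 0 0, hm_app 1 1, hm_app 0 1, hm_app 1 0, ht_def, hd_def,
      htK_def, hdK_def, map_add, map_sub, _root_.map_mul f, _root_.map_mul f]
  have hdK0 : dK ≠ 0 := by
    have hu : IsUnit M.det := (Matrix.isUnit_iff_isUnit_det M).mp A.isUnit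
    rw [Matrix.det_fin_two] at hu
    exact hu.ne_zero
  have hd0 : d ≠ 0 := fun h0 => hdK0 (hf (by rw [map_zero]; exact h0))
  -- a root of the characteristic polynomial
  obtain ⟨lam, hlamroot⟩ : ∃ lam : L, lam * lam = t * lam - d := by
    obtain ⟨z, hz⟩ := IsAlgClosed.exists_root
      (Polynomial.C 1 * Polynomial.X ^ 2 + Polynomial.C (-t) * Polynomial.X + Polynomial.C d)
      (by rw [Polynomial.degree_quadratic one_ne_zero]; decide)
    refine ⟨z, ?_⟩
    have hz' := hz
    simp only [Polynomial.IsRoot, Polynomial.eval_add, Polynomial.eval_mul,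
      Polynomial.eval_pow, Polynomial.eval_C, Polynomial.eval_X] at hz'
    linear_combination hz'
  set mu : L := t - lam with hmu_def
  have hmu_root : mu * mu = t * mu - d := by rw [hmu_def]; linear_combination hlamroot
  have hlammu : lam * mu = d := by rw [hmu_def]; linear_combination (-1 : L) * hlamroot
  have hlam0 : lam ≠ 0 := fun h0 => hd0 (by rw [← hlammu, h0, zero_mul])
  have hmu0 : mu ≠ 0 := fun h0 => hd0 (by rw [← hlammu, h0, mul_zero])
  -- M is not a scalar matrix
  have hns : ¬∃ c : K, M = c • (1 : Matrix (Fin 2) (Fin 2) K) := by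
    rintro ⟨c, hc⟩
    have hcen : A ∈ Subgroup.center (GL (Fin 2) K) := gl2_mem_center_iff.mpr ⟨c, hc⟩
    have h1 : (QuotientGroup.mk A : PGL2 K) = 1 := (QuotientGroup.eq_one_iff A).mpr hcen
    rw [h1, orderOf_one] at hx
    omega
  -- scalar detection over L
  have hdetect : ∀ a b s : L,
      a • m + b • (1 : Matrix (Fin 2) (Fin 2) L) = s • (1 : Matrix (Fin 2) (Fin 2) L) →
      a = 0 ∧ b = s := by
    intro a b s hab
    have h01 : a * m 0 1 = 0 := by
      have := congrFun (congrFun hab 0) 1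
      simpa [Matrix.one_apply] using this
    have h10 : a * m 1 0 = 0 := by
      have := congrFun (congrFun hab 1) 0
      simpa [Matrix.one_apply] using this
    have h00 : a * m 0 0 + b = s := by
      have := congrFun (congrFun hab 0) 0
      simpa [Matrix.one_apply] using this
    have h11 : a * m 1 1 + b = s := by
      have := congrFun (congrFun hab 1) 1
      simpa [Matrix.one_apply] using this
    by_cases ha : a = 0
    · subst ha
      simp only [zero_mul, zero_add] at h00
      exact ⟨rfl, h00⟩
    · exfalso
      apply hns
      refine ⟨M 0 0, ?_⟩
      have e01 : M 0 1 = 0 := by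
        apply hf
        rw [← hm_app 0 1, map_zero]
        exact (mul_eq_zero.mp h01).resolve_left ha
      have e10 : M 1 0 = 0 := by
        apply hf
        rw [← hm_app 1 0, map_zero]
        exact (mul_eq_zero.mp h10).resolve_left ha
      have e0011 : M 0 0 = M 1 1 := by
        apply hf
        rw [← hm_app 0 0, ← hm_app 1 1]
        have : a * m 0 0 = a * m 1 1 := by linear_combination h00 - h11
        exact mul_left_cancel₀ ha this
      ext i j
      fin_cases i <;> fin_cases j <;>
        simp [Matrix.one_apply, e01, e10, ← e0011]
  -- central powers give divisibility
  have hcenter_pow : ∀ k : ℕ, (∃ c : K, M ^ k = c • (1 : Matrix (Fin 2) (Fin 2) K)) → r ∣ k := by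
    rintro k ⟨c, hc⟩
    have hck : A ^ k ∈ Subgroup.center (GL (Fin 2) K) := by
      apply gl2_mem_center_iff.mpr
      exact ⟨c, by rw [Units.val_pow_eq_pow_val, ← hM_def, hc]⟩
    have h1 : (QuotientGroup.mk A : PGL2 K) ^ k = 1 := by
      rw [← QuotientGroup.mk_pow]
      exact (QuotientGroup.eq_one_iff _).mpr hck
    have := orderOf_dvd_of_pow_eq_one h1
    rwa [hx] at this
  -- A ^ r is central
  obtain ⟨c, hcr⟩ : ∃ c : K, M ^ r = c • (1 : Matrix (Fin 2) (Fin 2) K) := by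
    have h1 : (QuotientGroup.mk A : PGL2 K) ^ r = 1 := by
      rw [← hx]; exact pow_orderOf_eq_one _
    have h2 : (QuotientGroup.mk (A ^ r) : PGL2 K) = 1 := by
      rw [QuotientGroup.mk_pow]
      exact h1
    obtain ⟨c, hc⟩ := gl2_mem_center_iff.mp ((QuotientGroup.eq_one_iff _).mp h2)
    exact ⟨c, by rw [← hc, Units.val_pow_eq_pow_val, ← hM_def]⟩
  have hsmul_map : ∀ (c : K), ((c • (1 : Matrix (Fin 2) (Fin 2) K)).map f)
      = f c • (1 : Matrix (Fin 2) (Fin 2) L) := by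
    intro c
    ext i j
    simp [Matrix.map_apply, Matrix.one_apply, apply_ite f]
  have hmr : m ^ r = f c • (1 : Matrix (Fin 2) (Fin 2) L) := by
    rw [hmap_pow, hcr, hsmul_map]
  have hpow := gl2_pow m t d hCH
  have har : (glSeq t d r).1 = 0 ∧ (glSeq t d r).2 = f c :=
    hdetect _ _ _ (by rw [← hpow r]; exact hmr)
  -- the two eigenvalues are distinct
  have hne : lam ≠ mu := by
    intro he
    have ht2 : t = 2 * lam := by rw [hmu_def] at he; linear_combination -he
    have hd2 : d = lam * lam := by rw [← hlammu, ← he]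
    have hdr := (gl2_double_root t d lam ht2 hd2 r).1
    rw [har.1, zero_mul] at hdr
    have hrL : (r : L) = 0 := by
      rcases mul_eq_zero.mp hdr.symm with h0 | h0
      · exact h0
      · exact absurd h0 (pow_ne_zero _ hlam0)
    apply hchar
    apply hf
    rw [map_natCast, map_zero, hrL]
  -- lam ^ r = mu ^ r
  have hlr : lam ^ r = (glSeq t d r).2 := by
    rw [gl2_root_pow t d lam hlamroot r, har.1, zero_mul, zero_add]
  have hmr' : mu ^ r = (glSeq t d r).2 := by
    rw [gl2_root_pow t d mu hmu_root r, har.1, zero_mul, zero_add]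
  have hlmr : lam ^ r = mu ^ r := by rw [hlr, hmr']
  have hzr : (lam / mu) ^ r = 1 := by
    rw [div_pow, hlmr, div_self (pow_ne_zero _ hmu0)]
  -- primitivity
  have hprim : ∀ l : ℕ, (lam / mu) ^ l = 1 → r ∣ l := by
    intro l hl
    have hlm : lam ^ l = mu ^ l := by
      rw [div_pow, div_eq_one_iff_eq (pow_ne_zero _ hmu0)] at hl
      exact hl
    have hall : (glSeq t d l).1 * lam + (glSeq t d l).2
        = (glSeq t d l).1 * mu + (glSeq t d l).2 := by
      rw [← gl2_root_pow t d lam hlamroot l, ← gl2_root_pow t d mu hmu_root l, hlm]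
    have ha0 : (glSeq t d l).1 = 0 := by
      have h0 : (glSeq t d l).1 * (lam - mu) = 0 := by linear_combination hall
      rcases mul_eq_zero.mp h0 with h1 | h1
      · exact h1
      · exact absurd (sub_eq_zero.mp h1) hne
    have hml : (M ^ l).map f = (glSeq t d l).2 • (1 : Matrix (Fin 2) (Fin 2) L) := by
      rw [← hmap_pow l, hpow l, ha0, zero_smul, zero_add]
    have e01 : (M ^ l) 0 1 = 0 := by
      apply hf
      have := congrFun (congrFun hml 0) 1
      simpa [Matrix.map_apply, Matrix.one_apply] using this
    have e10 : (M ^ l) 1 0 = 0 := by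
      apply hf
      have := congrFun (congrFun hml 1) 0
      simpa [Matrix.map_apply, Matrix.one_apply] using this
    have e0011 : (M ^ l) 0 0 = (M ^ l) 1 1 := by
      apply hf
      have h0 := congrFun (congrFun hml 0) 0
      have h1 := congrFun (congrFun hml 1) 1
      simp only [Matrix.map_apply, Matrix.smul_apply, Matrix.one_apply, if_pos rfl,
        smul_eq_mul, mul_one] at h0 h1
      rw [h0, h1]
    apply hcenter_pow l
    refine ⟨(M ^ l) 0 0, ?_⟩
    ext i j
    fin_cases i <;> fin_cases j <;> simp [Matrix.one_apply, e01, e10, ← e0011]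
  -- separability
  have hzprL : IsPrimitiveRoot (lam / mu) r := ⟨hzr, hprim⟩
  have hsep : IsSeparable K (lam / mu) := by
    have haev : (Polynomial.aeval (lam / mu)) (Polynomial.X ^ r - Polynomial.C (1 : K)) = 0 := by
      simp [hzr]
    have hdvd : minpoly K (lam / mu) ∣ Polynomial.X ^ r - Polynomial.C (1 : K) :=
      minpoly.dvd K _ haev
    exact (Polynomial.separable_X_pow_sub_C (1 : K) hchar one_ne_zero).of_dvd hdvd
  have hmem : lam / mu ∈ separableClosure K L := hsep
  refine ⟨⟨lam / mu, hmem⟩, ?_, ?_⟩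
  · constructor
    · apply Subtype.ext
      push_cast
      exact hzr
    · intro l hl
      apply hprim l
      have := congrArg (Subtype.val) hl
      push_cast at this
      exact this
  · refine ⟨(tK ^ 2 - 2 * dK) / dK, ?_⟩
    apply Subtype.ext
    have hval : ((algebraMap K (separableClosure K L) ((tK ^ 2 - 2 * dK) / dK) :
        separableClosure K L) : L) = f ((tK ^ 2 - 2 * dK) / dK) := by
      rw [hf_def, IsScalarTower.algebraMap_apply K (separableClosure K L) L]
      rfl
    rw [hval]
    rw [map_div₀, map_sub, map_pow, _root_.map_mul f, map_ofNat, ← ht_def, ← hd_def]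
    push_cast
    have hts : t = lam + mu := by rw [hmu_def]; ring
    rw [hts, ← hlammu, inv_div]
    field_simp
    ring
end

section
/- Let K be a field with char(K) ≠ 2,3, and suppose −1 is a sum of two squares in K. Then PGL₂(K) contains a subgroup isomorphic to the symmetric group S₄. -/
namespace S4inPGL2

/-- Integer quaternions, as coefficient quadruples `(w, x, y, z)`. -/
abbrev Q4 := ℤ × ℤ × ℤ × ℤ

/-- Quaternion multiplication. -/
def qmul (p q : Q4) : Q4 :=
  (p.1*q.1 - p.2.1*q.2.1 - p.2.2.1*q.2.2.1 - p.2.2.2*q.2.2.2,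
   p.1*q.2.1 + p.2.1*q.1 + p.2.2.1*q.2.2.2 - p.2.2.2*q.2.2.1,
   p.1*q.2.2.1 + p.2.2.1*q.1 + p.2.2.2*q.2.1 - p.2.1*q.2.2.2,
   p.1*q.2.2.2 + p.2.2.2*q.1 + p.2.1*q.2.2.1 - p.2.2.1*q.2.1)

def qconj (q : Q4) : Q4 := (q.1, -q.2.1, -q.2.2.1, -q.2.2.2)

def qnorm (q : Q4) : ℤ := q.1*q.1 + q.2.1*q.2.1 + q.2.2.1*q.2.2.1 + q.2.2.2*q.2.2.2

def qsmul (n : ℤ) (q : Q4) : Q4 := (n*q.1, n*q.2.1, n*q.2.2.1, n*q.2.2.2)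

/-- The table assigning to each permutation of the four diagonals of the cube
(encoded by the images of `0, 1, 2` as `16*i + 4*j + k`) a representative
quaternion of the corresponding rotation of the cube. -/
def tblN : ℕ → Q4
  | 6 => (1,0,0,0)
  | 7 => (0,1,-1,0)
  | 9 => (0,0,1,-1)
  | 11 => (1,-1,-1,-1)
  | 13 => (1,1,1,1)
  | 14 => (0,1,0,-1)
  | 18 => (0,1,1,0)
  | 19 => (0,0,0,1)
  | 24 => (1,1,-1,-1)
  | 27 => (1,0,1,0)
  | 28 => (1,-1,0,0)
  | 30 => (1,1,-1,1)
  | 33 => (1,-1,1,1)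
  | 35 => (1,1,0,0)
  | 36 => (0,1,0,1)
  | 39 => (1,-1,-1,1)
  | 44 => (0,0,1,0)
  | 45 => (1,0,0,-1)
  | 49 => (1,0,-1,0)
  | 50 => (1,-1,1,-1)
  | 52 => (1,1,1,-1)
  | 54 => (0,0,1,1)
  | 56 => (1,0,0,1)
  | 57 => (0,1,0,0)
  | _ => (1,0,0,0)

/-- The quaternion attached to a permutation in `S₄`. -/
def cq (σ : Equiv.Perm (Fin 4)) : Q4 :=
  tblN (16 * (σ 0).val + 4 * (σ 1).val + (σ 2).val)

/-- The quaternion attached to the composite of two permutations (stated via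
pointwise application, to keep kernel reduction fast). -/
def cqc (σ τ : Equiv.Perm (Fin 4)) : Q4 :=
  tblN (16 * (σ (τ 0)).val + 4 * (σ (τ 1)).val + (σ (τ 2)).val)

lemma cqc_eq (σ τ : Equiv.Perm (Fin 4)) : cqc σ τ = cq (σ * τ) := by
  simp [cqc, cq, Equiv.Perm.mul_apply]

/-- Extract the scalar ratio of two (proportional) quaternions. -/
def ratio (u v : Q4) : ℤ :=
  if v.1 ≠ 0 then u.1 / v.1
  else if v.2.1 ≠ 0 then u.2.1 / v.2.1
  else if v.2.2.1 ≠ 0 then u.2.2.1 / v.2.2.1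
  else u.2.2.2 / v.2.2.2

def lam (σ τ : Equiv.Perm (Fin 4)) : ℤ := ratio (qmul (cq σ) (cq τ)) (cqc σ τ)

set_option maxHeartbeats 4000000 in
lemma key : ∀ σ τ : Equiv.Perm (Fin 4),
    qmul (cq σ) (cq τ) = qsmul (lam σ τ) (cqc σ τ) := by decide

set_option maxHeartbeats 4000000 in
lemma lam_vals : ∀ σ τ : Equiv.Perm (Fin 4),
    lam σ τ = 1 ∨ lam σ τ = -1 ∨ lam σ τ = 2 ∨ lam σ τ = -2 ∨
    lam σ τ = 4 ∨ lam σ τ = -4 := by decide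

lemma norm_vals : ∀ σ : Equiv.Perm (Fin 4),
    qnorm (cq σ) = 1 ∨ qnorm (cq σ) = 2 ∨ qnorm (cq σ) = 4 := by decide

lemma cq_one : cq 1 = (1,0,0,0) := by decide

lemma qmul_qconj (q : Q4) : qmul q (qconj q) = (qnorm q, 0, 0, 0) := by
  obtain ⟨w, x, y, z⟩ := q
  simp only [qmul, qconj, qnorm]
  refine Prod.ext ?_ (Prod.ext ?_ (Prod.ext ?_ ?_)) <;> simp <;> ring

lemma qconj_qmul (q : Q4) : qmul (qconj q) q = (qnorm q, 0, 0, 0) := by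
  obtain ⟨w, x, y, z⟩ := q
  simp only [qmul, qconj, qnorm]
  refine Prod.ext ?_ (Prod.ext ?_ (Prod.ext ?_ ?_)) <;> simp <;> ring

variable {K : Type*} [Field K]

/-- The 2×2 matrix representing a quaternion, via the splitting of the
quaternion algebra `(−1,−1)` over `K` coming from `a² + b² = −1`. -/
def mq (a b : K) (q : Q4) : Matrix (Fin 2) (Fin 2) K :=
  !![(q.1 : K) + q.2.1*a - q.2.2.2*b, q.2.1*b + q.2.2.1 + q.2.2.2*a;
     q.2.1*b - q.2.2.1 + q.2.2.2*a, (q.1 : K) - q.2.1*a + q.2.2.2*b]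

variable {a b : K} (hsq : a ^ 2 + b ^ 2 = -1) (h2 : (2 : K) ≠ 0)

lemma mq_one : mq a b (1,0,0,0) = 1 := by
  simp only [mq]
  norm_num
  exact (Matrix.one_fin_two).symm

lemma mq_smul (n : ℤ) (q : Q4) : mq a b (qsmul n q) = (n : K) • mq a b q := by
  obtain ⟨w, x, y, z⟩ := q
  ext i j
  fin_cases i <;> fin_cases j <;> simp [mq, qsmul] <;> push_cast <;> ring

lemma mq_norm_smul (n : ℤ) :
    mq a b ((n : ℤ), 0, 0, 0) = (n : K) • (1 : Matrix (Fin 2) (Fin 2) K) := by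
  ext i j
  fin_cases i <;> fin_cases j <;> simp [mq, Matrix.one_apply]

include hsq in
lemma mq_mul (p q : Q4) : mq a b p * mq a b q = mq a b (qmul p q) := by
  obtain ⟨w, x, y, z⟩ := p
  obtain ⟨w', x', y', z'⟩ := q
  ext i j
  fin_cases i <;> fin_cases j <;>
    simp [mq, qmul, Matrix.mul_apply, Fin.sum_univ_two] <;> push_cast <;>
    first
      | linear_combination ((x:K)*x' + z*z') * hsq
      | linear_combination ((x:K)*z' - z*x') * hsq
      | linear_combination (-(x:K)*z' + z*x') * hsq
      | linear_combination (-(x:K)*x' - z*z') * hsq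
      | ring

include hsq h2 in
lemma norm_ne_zero (σ : Equiv.Perm (Fin 4)) : (qnorm (cq σ) : K) ≠ 0 := by
  have h4 : (4:K) ≠ 0 := by
    have h : (4:K) = 2*2 := by norm_num
    rw [h]; exact mul_ne_zero h2 h2
  rcases norm_vals σ with h | h | h <;> rw [h] <;> push_cast
  · exact one_ne_zero
  · exact h2
  · exact h4

/-- The lift of the permutation representation to `GL₂(K)`. -/
def fGL (σ : Equiv.Perm (Fin 4)) : GL (Fin 2) K where
  val := mq a b (cq σ)
  inv := (qnorm (cq σ) : K)⁻¹ • mq a b (qconj (cq σ))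
  val_inv := by
    rw [Matrix.mul_smul, mq_mul hsq, qmul_qconj, mq_norm_smul, smul_smul,
      inv_mul_cancel₀ (norm_ne_zero hsq h2 σ), one_smul]
  inv_val := by
    rw [Matrix.smul_mul, mq_mul hsq, qconj_qmul, mq_norm_smul, smul_smul,
      inv_mul_cancel₀ (norm_ne_zero hsq h2 σ), one_smul]

lemma fGL_val (σ : Equiv.Perm (Fin 4)) :
    (fGL hsq h2 σ : Matrix (Fin 2) (Fin 2) K) = mq a b (cq σ) := rfl

/-- A scalar element of `GL₂(K)` is central. -/
lemma scalar_mem_center (A : GL (Fin 2) K) (c : K)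
    (h : (A : Matrix (Fin 2) (Fin 2) K) = c • 1) :
    A ∈ Subgroup.center (GL (Fin 2) K) := by
  rw [Subgroup.mem_center_iff]
  intro g
  refine Units.ext ?_
  rw [Units.val_mul, Units.val_mul, h, mul_smul_comm, smul_mul_assoc, mul_one, one_mul]

/-- A central element of `GL₂(K)` is scalar. -/
lemma center_scalar {A : GL (Fin 2) K} (h : A ∈ Subgroup.center (GL (Fin 2) K)) :
    ∃ c : K, (A : Matrix (Fin 2) (Fin 2) K) = c • 1 := by
  rw [Subgroup.mem_center_iff] at h
  have comm : ∀ i j : Fin 2, i ≠ j →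
      Commute (Matrix.single i j 1) (A : Matrix (Fin 2) (Fin 2) K) := by
    intro i j hij
    have hEE : Matrix.single i j (1:K) * Matrix.single i j (1:K) = 0 :=
      Matrix.single_mul_single_of_ne (h := hij.symm) ..
    set E : Matrix (Fin 2) (Fin 2) K := Matrix.single i j 1 with hE
    have hT : (1 + E) * (1 - E) = 1 := by
      rw [mul_sub, add_mul, add_mul, hEE]
      simp
    have hT' : (1 - E) * (1 + E) = 1 := by
      rw [sub_mul, mul_add, mul_add, hEE]
      simp
    have hg := h ⟨1 + E, 1 - E, hT, hT'⟩
    have hg' : (1 + E) * (A : Matrix (Fin 2) (Fin 2) K)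
        = (A : Matrix (Fin 2) (Fin 2) K) * (1 + E) := by
      have h' := congrArg Units.val hg
      rw [Units.val_mul, Units.val_mul] at h'
      exact h'
    have : E * (A : Matrix (Fin 2) (Fin 2) K) = (A : Matrix (Fin 2) (Fin 2) K) * E := by
      have h1 : (A : Matrix (Fin 2) (Fin 2) K) + E * A
          = (A : Matrix (Fin 2) (Fin 2) K) + (A : Matrix (Fin 2) (Fin 2) K) * E := by
        calc (A : Matrix (Fin 2) (Fin 2) K) + E * A = (1 + E) * A := by
              rw [add_mul, one_mul]
          _ = (A : Matrix (Fin 2) (Fin 2) K) * (1 + E) := hg'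
          _ = _ := by rw [mul_add, mul_one]
      exact add_left_cancel h1
    exact this
  obtain ⟨r, hr⟩ := Matrix.mem_range_scalar_of_commute_single comm
  refine ⟨r, ?_⟩
  rw [← hr, Matrix.scalar_apply, Matrix.smul_one_eq_diagonal]

include hsq h2 in
lemma mq_key (σ τ : Equiv.Perm (Fin 4)) :
    mq a b (cq σ) * mq a b (cq τ) = ((lam σ τ : ℤ) : K) • mq a b (cq (σ * τ)) := by
  rw [mq_mul hsq, key σ τ, mq_smul, cqc_eq]

/-- The projective representation `S₄ → PGL₂(K)`. -/
def Phi : Equiv.Perm (Fin 4) →* PGL2 K where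
  toFun σ := QuotientGroup.mk (fGL hsq h2 σ)
  map_one' := by
    rw [QuotientGroup.eq_one_iff]
    refine scalar_mem_center _ 1 ?_
    rw [fGL_val, cq_one, mq_one, one_smul]
  map_mul' σ τ := by
    show _ = QuotientGroup.mk (fGL hsq h2 σ * fGL hsq h2 τ)
    rw [QuotientGroup.eq]
    refine scalar_mem_center _ ((lam σ τ : ℤ) : K) ?_
    show ((fGL hsq h2 (σ * τ))⁻¹).val * (fGL hsq h2 σ * fGL hsq h2 τ).val = _
    rw [Units.val_mul, fGL_val, fGL_val, mq_key hsq h2]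
    show (fGL hsq h2 (σ * τ)).inv * _ = _
    rw [mul_smul_comm,
      show mq a b (cq (σ * τ)) = (fGL hsq h2 (σ * τ)).val from rfl,
      (fGL hsq h2 (σ * τ)).inv_val]

set_option maxHeartbeats 1000000 in
lemma conj_rep : ∀ σ : Equiv.Perm (Fin 4), σ ≠ 1 → ∃ h : Equiv.Perm (Fin 4),
    (∀ i, h (σ i) = (⟨![1,0,2,3], ![1,0,2,3], by decide, by decide⟩ : Equiv.Perm (Fin 4)) (h i)) ∨
    (∀ i, h (σ i) = (⟨![1,2,0,3], ![2,0,1,3], by decide, by decide⟩ : Equiv.Perm (Fin 4)) (h i)) ∨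
    (∀ i, h (σ i) = (⟨![1,0,3,2], ![1,0,3,2], by decide, by decide⟩ : Equiv.Perm (Fin 4)) (h i)) ∨
    (∀ i, h (σ i) = (⟨![1,2,3,0], ![3,0,1,2], by decide, by decide⟩ : Equiv.Perm (Fin 4)) (h i)) := by
  decide

end S4inPGL2

/-- If `char K ≠ 2, 3` and `−1` is a sum of two squares in `K`, then `PGL₂(K)`
contains a subgroup isomorphic to the symmetric group `S₄`. -/
theorem pgl2_contains_S4
    (K : Type*) [Field K] (h2 : (2 : K) ≠ 0) (h3 : (3 : K) ≠ 0)
    (hsq : ∃ a b : K, a ^ 2 + b ^ 2 = -1) :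
    ∃ H : Subgroup (PGL2 K), Nonempty (H ≃* Equiv.Perm (Fin 4)) := by
  classical
  obtain ⟨a, b, hsq⟩ := hsq
  have h1 : (1 : K) ≠ 0 := one_ne_zero
  -- the four conjugacy class representatives and their quaternions
  set r1 : Equiv.Perm (Fin 4) := ⟨![1,0,2,3], ![1,0,2,3], by decide, by decide⟩ with hr1
  set r2 : Equiv.Perm (Fin 4) := ⟨![1,2,0,3], ![2,0,1,3], by decide, by decide⟩ with hr2
  set r3 : Equiv.Perm (Fin 4) := ⟨![1,0,3,2], ![1,0,3,2], by decide, by decide⟩ with hr3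
  set r4 : Equiv.Perm (Fin 4) := ⟨![1,2,3,0], ![3,0,1,2], by decide, by decide⟩ with hr4
  have hinj : Function.Injective (S4inPGL2.Phi hsq h2) := by
    rw [injective_iff_map_eq_one]
    intro σ hσ
    by_contra hne
    obtain ⟨h, hcase⟩ := S4inPGL2.conj_rep σ hne
    -- In all cases, some representative r satisfies h * σ * h⁻¹ = r and Phi r = 1.
    have scal : ∀ r : Equiv.Perm (Fin 4), (∀ i, h (σ i) = r (h i)) →
        ∃ c : K, S4inPGL2.mq a b (S4inPGL2.cq r) = c • 1 := by
      intro r hri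
      have hconj : h * σ * h⁻¹ = r := by
        ext i
        have := hri (h⁻¹ i)
        simp only [Equiv.Perm.mul_apply]
        rw [this, Equiv.Perm.inv_def, Equiv.apply_symm_apply]
      have hPhir : S4inPGL2.Phi hsq h2 r = 1 := by
        rw [← hconj, map_mul, map_mul, hσ, mul_one, map_inv, mul_inv_cancel]
      rw [show S4inPGL2.Phi hsq h2 r = QuotientGroup.mk (S4inPGL2.fGL hsq h2 r) from rfl,
        QuotientGroup.eq_one_iff] at hPhir
      obtain ⟨c, hc⟩ := S4inPGL2.center_scalar hPhir
      rw [S4inPGL2.fGL_val] at hc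
      exact ⟨c, hc⟩
    rcases hcase with hcs | hcs | hcs | hcs
    · obtain ⟨c, hc⟩ := scal r1 hcs
      rw [show S4inPGL2.cq r1 = (0,1,1,0) from by decide] at hc
      have e01 : b + 1 = 0 := by
        have := congrFun (congrFun hc 0) 1
        simpa [S4inPGL2.mq, Matrix.one_apply] using this
      have e10 : b - 1 = 0 := by
        have := congrFun (congrFun hc 1) 0
        simpa [S4inPGL2.mq, Matrix.one_apply] using this
      exact h2 (by linear_combination e01 - e10)
    · obtain ⟨c, hc⟩ := scal r2 hcs
      rw [show S4inPGL2.cq r2 = (1,1,-1,-1) from by decide] at hc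
      have e01 : b + -1 + -1 * a = 0 := by
        have := congrFun (congrFun hc 0) 1
        simpa [S4inPGL2.mq, Matrix.one_apply] using this
      have e10 : b - -1 + -1 * a = 0 := by
        have := congrFun (congrFun hc 1) 0
        simpa [S4inPGL2.mq, Matrix.one_apply] using this
      exact h2 (by linear_combination e10 - e01)
    · obtain ⟨c, hc⟩ := scal r3 hcs
      rw [show S4inPGL2.cq r3 = (0,0,0,1) from by decide] at hc
      have e01 : a = 0 := by
        have := congrFun (congrFun hc 0) 1
        simpa [S4inPGL2.mq, Matrix.one_apply] using this
      have e00 : -(1*b) = c := by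
        have := congrFun (congrFun hc 0) 0
        simpa [S4inPGL2.mq, Matrix.one_apply] using this
      have e11 : 1*b = c := by
        have := congrFun (congrFun hc 1) 1
        simpa [S4inPGL2.mq, Matrix.one_apply] using this
      have hb2 : 2 * b = 0 := by linear_combination e11 - e00
      have hb : b = 0 := (mul_eq_zero.mp hb2).resolve_left h2
      rw [e01, hb] at hsq
      norm_num at hsq
    · obtain ⟨c, hc⟩ := scal r4 hcs
      rw [show S4inPGL2.cq r4 = (1,0,1,0) from by decide] at hc
      have e01 : (1 : K) = 0 := by
        have := congrFun (congrFun hc 0) 1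
        simpa [S4inPGL2.mq, Matrix.one_apply] using this
      exact one_ne_zero e01
  exact ⟨(S4inPGL2.Phi hsq h2).range, ⟨(MonoidHom.ofInjective hinj).symm⟩⟩
end

section
/- Let K be a field with char(K) ≠ 2,3. If PGL₂(K) contains a subgroup isomorphic to the alternating group A₄, then −1 is a sum of two squares in K. -/
open Matrix

section aux
variable {K : Type*} [Field K]

lemma aux_quadform {K : Type*} [Field K] (h2 : (2:K) ≠ 0) (p q r x y z g h k : K)
    (h1 : p^2 + q*r = -1) (hx : x^2 + y*z = -1) (h4 : g^2 + h*k = -1)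
    (h3 : 2*p*x + q*z + r*y = 0) (h5 : 2*p*g + q*k + r*h = 0) (h6 : 2*x*g + y*k + z*h = 0) :
    ∃ a b : K, a ^ 2 + b ^ 2 = -1 := by
  have gram : (!![p,q,r;x,y,z;g,h,k] : Matrix (Fin 3) (Fin 3) K) * !![2,0,0;0,0,1;0,1,0]
      * !![p,x,g;q,y,h;r,z,k] = (-2 : K) • 1 := by
    ext i j
    fin_cases i <;> fin_cases j <;> simp [Matrix.mul_apply, Fin.sum_univ_three, Matrix.one_apply]
    · linear_combination 2*h1
    · linear_combination h3
    · linear_combination h5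
    · linear_combination h3
    · linear_combination 2*hx
    · linear_combination h6
    · linear_combination h5
    · linear_combination h6
    · linear_combination 2*h4
  have h0 := congrArg Matrix.det gram
  rw [Matrix.det_mul, Matrix.det_mul] at h0
  have hMt : (!![p,q,r;x,y,z;g,h,k] : Matrix (Fin 3) (Fin 3) K).det
      = (!![p,x,g;q,y,h;r,z,k] : Matrix (Fin 3) (Fin 3) K).det := by
    simp [Matrix.det_fin_three]; ring
  have hJd : (!![2,0,0;0,0,1;0,1,0] : Matrix (Fin 3) (Fin 3) K).det = -2 := by
    simp [Matrix.det_fin_three]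
  have hsm : ((-2:K) • (1 : Matrix (Fin 3) (Fin 3) K)).det = -8 := by
    rw [Matrix.det_smul, Matrix.det_one]; norm_num
  rw [hMt, hJd, hsm] at h0
  set D := (!![p,x,g;q,y,h;r,z,k] : Matrix (Fin 3) (Fin 3) K).det with hD
  have hdet : D^2 = 4 := mul_left_cancel₀ h2 (by linear_combination -h0)
  have hDne : D ≠ 0 := by
    intro hc
    rw [hc] at hdet
    have h40 : (2:K)*2 = 0 := by linear_combination -hdet
    rcases mul_eq_zero.mp h40 with hcc|hcc <;> exact h2 hcc
  set α := z*g - x*k with hα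
  set β := p*k - r*g with hβ
  set γ := r*x - p*z with hγ
  have e1 : α*p + β*x + γ*g = 0 := by rw [hα, hβ, hγ]; ring
  have e3 : α*r + β*z + γ*k = 0 := by rw [hα, hβ, hγ]; ring
  have c2 : α*q + β*y + γ*h = D := by
    rw [hα, hβ, hγ, hD]; simp [Matrix.det_fin_three]; ring
  have key : α^2 + β^2 + γ^2 = 0 := by
    linear_combination α^2*h1 + β^2*hx + γ^2*h4 + (α*β)*h3 + (α*γ)*h5 + (β*γ)*h6
      - (α*p+β*x+γ*g)*e1 - (α*q+β*y+γ*h)*e3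
  by_cases hγ0 : γ ≠ 0
  · exact ⟨α/γ, β/γ, by field_simp; linear_combination key⟩
  push_neg at hγ0
  by_cases hβ0 : β ≠ 0
  · refine ⟨α/β, 0, ?_⟩
    have : α^2 + β^2 = 0 := by linear_combination key - γ*hγ0
    field_simp; linear_combination this
  push_neg at hβ0
  have hα0 : α = 0 := by
    have : α^2 = 0 := by linear_combination key - γ*hγ0 - β*hβ0
    exact pow_eq_zero_iff (n := 2) (by norm_num) |>.mp this
  exact absurd c2.symm (by rw [hα0, hβ0, hγ0]; simpa using hDne)

lemma sum_sq_of_relations {K : Type*} [Field K] (h2 : (2:K) ≠ 0)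
    (p q r x y z : K) (h1 : p^2 + q*r = -1) (hx : x^2 + y*z = -1)
    (h3 : 2*p*x + q*z + r*y = 0) : ∃ a b : K, a ^ 2 + b ^ 2 = -1 := by
  have hprod : (p^2 + q*r) * (x^2 + y*z) = 1 := by rw [h1, hx]; ring
  exact aux_quadform h2 p q r x y z (p*x + q*z) (p*y - q*x) (r*x - p*z) h1 hx
    (by linear_combination (p*x+q*z)*h3 - hprod)
    h3 (by linear_combination p*h3) (by linear_combination x*h3)

lemma sum_sq_of_matrices {K : Type*} [Field K] (h2 : (2:K) ≠ 0)
    (A B : Matrix (Fin 2) (Fin 2) K) (hA : A*A = (-1:K) • 1) (hB : B*B = (-1:K) • 1)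
    (hAB : A*B + B*A = 0) : ∃ a b : K, a ^ 2 + b ^ 2 = -1 := by
  have eA := congr_fun (congr_fun hA 0) 0
  have eB := congr_fun (congr_fun hB 0) 0
  have eC := congr_fun (congr_fun hAB 0) 0
  simp [Matrix.mul_apply, Fin.sum_univ_two, Matrix.one_apply] at eA eB eC
  exact sum_sq_of_relations h2 (A 0 0) (A 0 1) (A 1 0) (B 0 0) (B 0 1) (B 1 0)
    (by linear_combination eA) (by linear_combination eB) (by linear_combination eC)

lemma center_scalar {K : Type*} [Field K] {N : GL (Fin 2) K}
    (h : N ∈ Subgroup.center (GL (Fin 2) K)) :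
    ∃ c : K, (N : Matrix (Fin 2) (Fin 2) K) = c • (1 : Matrix (Fin 2) (Fin 2) K) := by
  rw [Subgroup.mem_center_iff] at h
  have key : ∀ i j : Fin 2, i ≠ j →
      Commute (single i j (1:K)) (N : Matrix (Fin 2) (Fin 2) K) := by
    intro i j hij
    have hE2 : single i j (1:K) * single i j (1:K) = 0 :=
      by simp [Ne.symm hij]
    have h1 : (1 + single i j (1:K)) * (1 - single i j (1:K)) = 1 := by
      have : (1 + single i j (1:K)) * (1 - single i j (1:K))
          = 1 - single i j (1:K) * single i j (1:K) := by noncomm_ring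
      rw [this, hE2, sub_zero]
    have h1' : (1 - single i j (1:K)) * (1 + single i j (1:K)) = 1 := by
      have : (1 - single i j (1:K)) * (1 + single i j (1:K))
          = 1 - single i j (1:K) * single i j (1:K) := by noncomm_ring
      rw [this, hE2, sub_zero]
    have hT := congrArg Units.val
      (h (⟨1 + single i j (1:K), 1 - single i j (1:K), h1, h1'⟩ : GL (Fin 2) K))
    simp only [Units.val_mul] at hT
    have hT' : (1 + single i j (1:K)) * (N : Matrix (Fin 2) (Fin 2) K)
        = (N : Matrix (Fin 2) (Fin 2) K) * (1 + single i j (1:K)) := hT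
    have : single i j (1:K) * (N : Matrix (Fin 2) (Fin 2) K)
        = (N : Matrix (Fin 2) (Fin 2) K) * single i j (1:K) := by
      have expand := hT'
      rw [add_mul, mul_add, one_mul, mul_one] at expand
      exact add_left_cancel expand
    exact this
  obtain ⟨c, hc⟩ := mem_range_scalar_of_commute_single fun i j hij => key i j hij
  refine ⟨c, ?_⟩
  rw [← hc]
  rw [Matrix.scalar_apply, Matrix.smul_one_eq_diagonal]

lemma scalar_mem_center {K : Type*} [Field K] (N : GL (Fin 2) K) (c : K)
    (hc : (N : Matrix (Fin 2) (Fin 2) K) = c • (1 : Matrix (Fin 2) (Fin 2) K)) :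
    N ∈ Subgroup.center (GL (Fin 2) K) := by
  rw [Subgroup.mem_center_iff]
  intro g
  ext
  simp only [Units.val_mul, hc]
  rw [mul_smul_comm, smul_mul_assoc, mul_one, one_mul]

lemma trace_zero_of_sq_scalar {K : Type*} [Field K] (A : Matrix (Fin 2) (Fin 2) K) (α : K)
    (hA : A*A = α • 1) (hAs : ∀ c : K, A ≠ c • 1) : A 0 0 + A 1 1 = 0 := by
  have a00 := congr_fun (congr_fun hA 0) 0
  have a01 := congr_fun (congr_fun hA 0) 1
  have a10 := congr_fun (congr_fun hA 1) 0
  have a11 := congr_fun (congr_fun hA 1) 1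
  simp [Matrix.mul_apply, Fin.sum_univ_two, Matrix.one_apply] at a00 a01 a10 a11
  by_contra hps
  have q0 : A 0 1 = 0 := by
    rcases mul_eq_zero.mp (show A 0 1 * (A 0 0 + A 1 1) = 0 by linear_combination a01) with h | h
    · exact h
    · exact absurd h hps
  have r0 : A 1 0 = 0 := by
    rcases mul_eq_zero.mp (show A 1 0 * (A 0 0 + A 1 1) = 0 by linear_combination a10) with h | h
    · exact h
    · exact absurd h hps
  have heq : A 0 0 = A 1 1 := by
    rcases mul_eq_zero.mp (show (A 0 0 - A 1 1) * (A 0 0 + A 1 1) = 0 by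
      linear_combination a00 - a11) with h | h
    · exact sub_eq_zero.mp h
    · exact absurd h hps
  refine hAs (A 0 0) ?_
  ext i j
  fin_cases i <;> fin_cases j <;> simp [Matrix.one_apply, q0, r0, ← heq]

lemma commute_case {K : Type*} [Field K] (h2 : (2:K) ≠ 0) (A B : Matrix (Fin 2) (Fin 2) K)
    (α β : K) (hA : A*A = α • 1) (hB : B*B = β • 1) (hcomm : A*B = B*A)
    (hAs : ∀ c : K, A ≠ c • 1) (hBs : ∀ c : K, B ≠ c • 1) :
    ∃ lam : K, B = lam • A := by
  have htrA := trace_zero_of_sq_scalar A α hA hAs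
  have htrB := trace_zero_of_sq_scalar B β hB hBs
  have c00 := congr_fun (congr_fun hcomm 0) 0
  have c01 := congr_fun (congr_fun hcomm 0) 1
  have c10 := congr_fun (congr_fun hcomm 1) 0
  simp [Matrix.mul_apply, Fin.sum_univ_two] at c00 c01 c10
  have d1 : A 0 1 * B 1 0 - B 0 1 * A 1 0 = 0 := by linear_combination c00
  have d2 : A 0 0 * B 0 1 - A 0 1 * B 0 0 = 0 :=
    mul_left_cancel₀ h2 (show (2:K) * (A 0 0 * B 0 1 - A 0 1 * B 0 0) = 2 * 0 by
      linear_combination c01 - A 0 1 * htrB + B 0 1 * htrA)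
  have d3 : A 1 0 * B 0 0 - A 0 0 * B 1 0 = 0 :=
    mul_left_cancel₀ h2 (show (2:K) * (A 1 0 * B 0 0 - A 0 0 * B 1 0) = 2 * 0 by
      linear_combination c10 - B 1 0 * htrA + A 1 0 * htrB)
  have hA0 : ¬(A 0 0 = 0 ∧ A 0 1 = 0 ∧ A 1 0 = 0) := by
    rintro ⟨hp, hq, hr⟩
    refine hAs 0 ?_
    ext i j
    fin_cases i <;> fin_cases j <;>
      simp [hp, hq, hr, show A 1 1 = 0 by linear_combination htrA - hp]
  by_cases hp : A 0 0 ≠ 0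
  · refine ⟨B 0 0 / A 0 0, ?_⟩
    ext i j
    fin_cases i <;> fin_cases j <;> simp [Matrix.smul_apply] <;> field_simp
    · linear_combination d2
    · linear_combination -d3
    · linear_combination A 0 0 * htrB - B 0 0 * htrA
  push_neg at hp
  have hA11 : A 1 1 = 0 := by linear_combination htrA - hp
  by_cases hq : A 0 1 ≠ 0
  · have hB00 : B 0 0 = 0 := by
      rcases mul_eq_zero.mp (show A 0 1 * B 0 0 = 0 by linear_combination -d2 + B 0 1 * hp)
        with h | h
      · exact absurd h hq
      · exact h
    have hB11 : B 1 1 = 0 := by linear_combination htrB - hB00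
    refine ⟨B 0 1 / A 0 1, ?_⟩
    ext i j
    fin_cases i <;> fin_cases j <;> simp [Matrix.smul_apply]
    · simp [hp, hB00]
    · field_simp
    · field_simp
      linear_combination d1
    · simp [hA11, hB11]
  push_neg at hq
  have hr : A 1 0 ≠ 0 := by
    intro hr0
    exact hA0 ⟨hp, hq, hr0⟩
  have hB00 : B 0 0 = 0 := by
    rcases mul_eq_zero.mp (show A 1 0 * B 0 0 = 0 by linear_combination d3 + B 1 0 * hp)
      with h | h
    · exact absurd h hr
    · exact h
  have hB11 : B 1 1 = 0 := by linear_combination htrB - hB00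
  have hB01 : B 0 1 = 0 := by
    rcases mul_eq_zero.mp (show B 0 1 * A 1 0 = 0 by linear_combination -d1 + B 1 0 * hq)
      with h | h
    · exact h
    · exact absurd h hr
  refine ⟨B 1 0 / A 1 0, ?_⟩
  ext i j
  fin_cases i <;> fin_cases j <;> simp [Matrix.smul_apply]
  · simp [hp, hB00]
  · simp [hq, hB01]
  · field_simp
  · simp [hA11, hB11]

lemma smul_one_inj' {a b : K} (h : a • (1 : Matrix (Fin 2) (Fin 2) K) = b • 1) : a = b := by
  have := congr_fun (congr_fun h 0) 0; simpa using this

lemma scalar_ne_zero (W : GL (Fin 2) K) {c : K}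
    (h : (W : Matrix (Fin 2) (Fin 2) K) = c • (1 : Matrix (Fin 2) (Fin 2) K)) : c ≠ 0 := by
  intro hc
  rw [hc, zero_smul] at h
  have h1 : (W : Matrix (Fin 2) (Fin 2) K) * (W⁻¹ : GL (Fin 2) K) = 1 := W.mul_inv
  rw [h, zero_mul] at h1
  have := congr_fun (congr_fun h1 0) 0
  simp at this

lemma conj_sq (U A : GL (Fin 2) K) {α : K} {X : Matrix (Fin 2) (Fin 2) K}
    (hα : (A : Matrix (Fin 2) (Fin 2) K) * A = α • 1)
    (hX : ((U*A*U⁻¹ : GL (Fin 2) K) : Matrix (Fin 2) (Fin 2) K) = X) :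
    X * X = α • 1 := by
  calc X * X
      = ((U*A*U⁻¹ : GL (Fin 2) K) : Matrix (Fin 2) (Fin 2) K)
        * ((U*A*U⁻¹ : GL (Fin 2) K) : Matrix (Fin 2) (Fin 2) K) := by rw [hX]
    _ = (((U*A*U⁻¹)*(U*A*U⁻¹) : GL (Fin 2) K) : Matrix (Fin 2) (Fin 2) K) :=
        (Units.val_mul _ _).symm
    _ = ((U*(A*A)*U⁻¹ : GL (Fin 2) K) : Matrix (Fin 2) (Fin 2) K) := by
        rw [show (U*A*U⁻¹)*(U*A*U⁻¹) = U*(A*A)*U⁻¹ from by group]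
    _ = (U : Matrix (Fin 2) (Fin 2) K) * ((A : Matrix (Fin 2) (Fin 2) K)*A)
        * ((U⁻¹ : GL (Fin 2) K) : Matrix (Fin 2) (Fin 2) K) := by
        simp only [Units.val_mul]
    _ = α • 1 := by
        rw [hα, mul_smul_comm, mul_one, smul_mul_assoc, U.mul_inv]

lemma main_reduction (h2 : (2 : K) ≠ 0)
    (a b u v : PGL2 K)
    (ra : a * a = 1) (rb : b * b = 1) (rc : a * b = b * a)
    (ru : u * a * u⁻¹ = b) (rv : v * a * v⁻¹ = a * b)
    (rne : a ≠ b) (ra1 : a ≠ 1) (rb1 : b ≠ 1) :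
    ∃ x y : K, x ^ 2 + y ^ 2 = -1 := by
  set Z := Subgroup.center (GL (Fin 2) K) with hZ
  obtain ⟨A, hA⟩ := QuotientGroup.mk'_surjective Z a
  obtain ⟨B, hB⟩ := QuotientGroup.mk'_surjective Z b
  obtain ⟨U, hU⟩ := QuotientGroup.mk'_surjective Z u
  obtain ⟨V, hV⟩ := QuotientGroup.mk'_surjective Z v
  have mem_of_one : ∀ W : GL (Fin 2) K, QuotientGroup.mk' Z W = 1 → W ∈ Z := by
    intro W hW
    exact (QuotientGroup.eq_one_iff W).mp hW
  obtain ⟨α, hα⟩ := center_scalar (mem_of_one (A*A) (by rw [_root_.map_mul, hA, ra]))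
  obtain ⟨β, hβ⟩ := center_scalar (mem_of_one (B*B) (by rw [_root_.map_mul, hB, rb]))
  have hαne : α ≠ 0 := scalar_ne_zero (A*A) hα
  have hβne : β ≠ 0 := scalar_ne_zero (B*B) hβ
  rw [Units.val_mul] at hα hβ
  -- commutator is scalar
  obtain ⟨d, hd⟩ := center_scalar (mem_of_one (A*B*(B*A)⁻¹)
    (by rw [_root_.map_mul, _root_.map_inv, _root_.map_mul, _root_.map_mul, hA, hB, rc]; group))
  have hdrel : (A : Matrix (Fin 2) (Fin 2) K) * B = d • ((B : Matrix (Fin 2) (Fin 2) K) * A) := by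
    conv_lhs => rw [← Units.val_mul, show (A*B : GL (Fin 2) K) = (A*B*(B*A)⁻¹)*(B*A) from by group]
    rw [Units.val_mul, hd, smul_mul_assoc, one_mul, Units.val_mul]
  -- conjugation scalars
  obtain ⟨c, hc⟩ := center_scalar (mem_of_one (U*A*U⁻¹*B⁻¹)
    (by rw [_root_.map_mul, _root_.map_inv, _root_.map_mul, _root_.map_inv, _root_.map_mul,
      hA, hB, hU, ru]; group))
  have hcrel : ((U*A*U⁻¹ : GL (Fin 2) K) : Matrix (Fin 2) (Fin 2) K)
      = c • ((B : GL (Fin 2) K) : Matrix (Fin 2) (Fin 2) K) := by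
    conv_lhs => rw [show (U*A*U⁻¹ : GL (Fin 2) K) = (U*A*U⁻¹*B⁻¹)*B from by group]
    rw [Units.val_mul, hc, smul_mul_assoc, one_mul]
  obtain ⟨ev, hev⟩ := center_scalar (mem_of_one (V*A*V⁻¹*(A*B)⁻¹)
    (by rw [_root_.map_mul, _root_.map_inv, _root_.map_mul, _root_.map_mul, _root_.map_inv,
      _root_.map_mul, hA, hB, hV, rv]; group))
  have hevrel : ((V*A*V⁻¹ : GL (Fin 2) K) : Matrix (Fin 2) (Fin 2) K)
      = ev • ((A : Matrix (Fin 2) (Fin 2) K) * B) := by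
    conv_lhs => rw [show (V*A*V⁻¹ : GL (Fin 2) K) = (V*A*V⁻¹*(A*B)⁻¹)*(A*B) from by group]
    rw [Units.val_mul, hev, smul_mul_assoc, one_mul, Units.val_mul]
  -- square of U-conjugate
  have hsqU : c * c * β = α := by
    apply smul_one_inj'
    have h1 := conj_sq U A hα hcrel
    rw [smul_mul_assoc, mul_smul_comm, hβ, smul_smul, smul_smul] at h1
    exact h1
  -- B ≠ 0
  have hBne0 : ((B : GL (Fin 2) K) : Matrix (Fin 2) (Fin 2) K) ≠ 0 := by
    intro h0
    have h1 : (B : Matrix (Fin 2) (Fin 2) K) * (B⁻¹ : GL (Fin 2) K) = 1 := B.mul_inv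
    rw [h0, zero_mul] at h1
    have := congr_fun (congr_fun h1 0) 0
    simp at this
  -- d² = 1
  have hd2 : d * d = 1 := by
    have e1 : α • ((B : GL (Fin 2) K) : Matrix (Fin 2) (Fin 2) K)
        = (d * d * α) • ((B : GL (Fin 2) K) : Matrix (Fin 2) (Fin 2) K) := by
      calc α • ((B : GL (Fin 2) K) : Matrix (Fin 2) (Fin 2) K)
          = ((A : Matrix (Fin 2) (Fin 2) K) * A) * B := by rw [hα, smul_mul_assoc, one_mul]
        _ = (A : Matrix (Fin 2) (Fin 2) K) * ((A : Matrix (Fin 2) (Fin 2) K) * B) := by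
            rw [mul_assoc]
        _ = (A : Matrix (Fin 2) (Fin 2) K) * (d • ((B : Matrix (Fin 2) (Fin 2) K) * A)) := by
            rw [hdrel]
        _ = d • (((A : Matrix (Fin 2) (Fin 2) K) * B) * A) := by
            rw [mul_smul_comm, mul_assoc]
        _ = d • ((d • ((B : Matrix (Fin 2) (Fin 2) K) * A)) * A) := by rw [hdrel]
        _ = (d * d) • ((B : Matrix (Fin 2) (Fin 2) K) * ((A : Matrix (Fin 2) (Fin 2) K) * A)) := by
            rw [smul_mul_assoc, smul_smul, mul_assoc]
        _ = (d * d * α) • ((B : GL (Fin 2) K) : Matrix (Fin 2) (Fin 2) K) := by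
            rw [hα, mul_smul_comm, mul_one, smul_smul]
    have e2 : (α - d * d * α) • ((B : GL (Fin 2) K) : Matrix (Fin 2) (Fin 2) K) = 0 := by
      rw [sub_smul, e1, sub_self]
    rcases smul_eq_zero.mp e2 with h0 | h0
    · rcases mul_eq_zero.mp (show α * (1 - d*d) = 0 by linear_combination h0) with h1 | h1
      · exact absurd h1 hαne
      · linear_combination -h1
    · exact absurd h0 hBne0
  -- A, B are not scalar
  have hAs : ∀ e : K, (A : Matrix (Fin 2) (Fin 2) K) ≠ e • 1 := by
    intro e he
    exact ra1 (hA ▸ (QuotientGroup.eq_one_iff A).mpr (scalar_mem_center A e he))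
  have hBs : ∀ e : K, (B : Matrix (Fin 2) (Fin 2) K) ≠ e • 1 := by
    intro e he
    exact rb1 (hB ▸ (QuotientGroup.eq_one_iff B).mpr (scalar_mem_center B e he))
  rcases mul_eq_zero.mp (show (d - 1) * (d + 1) = 0 by linear_combination hd2) with hcase | hcase
  · -- d = 1 : A and B commute, contradiction
    have hcomm : (A : Matrix (Fin 2) (Fin 2) K) * B = (B : Matrix (Fin 2) (Fin 2) K) * A := by
      rw [hdrel, show d = 1 from by linear_combination hcase, one_smul]
    obtain ⟨lam, hlam⟩ := commute_case h2 _ _ α β hα hβ hcomm hAs hBs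
    exfalso
    have hmem : B * A⁻¹ ∈ Z := by
      apply scalar_mem_center _ lam
      rw [Units.val_mul, hlam, smul_mul_assoc, A.mul_inv]
    have hba : b * a⁻¹ = 1 := by
      rw [← hB, ← hA, ← _root_.map_inv, ← _root_.map_mul]
      exact (QuotientGroup.eq_one_iff _).mpr hmem
    exact rne (mul_inv_eq_one.mp hba).symm
  · -- d = -1 : anticommuting case
    have hdneg : d = -1 := by linear_combination hcase
    have hanti : (A : Matrix (Fin 2) (Fin 2) K) * B + (B : Matrix (Fin 2) (Fin 2) K) * A = 0 := by
      rw [hdrel, hdneg, neg_smul, one_smul, neg_add_cancel]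
    have hBA : (B : Matrix (Fin 2) (Fin 2) K) * A = -((A : Matrix (Fin 2) (Fin 2) K) * B) :=
      eq_neg_of_add_eq_zero_left (by rwa [add_comm] at hanti)
    have hABsq : ((A : Matrix (Fin 2) (Fin 2) K) * B) * ((A : Matrix (Fin 2) (Fin 2) K) * B)
        = (-(α*β)) • 1 := by
      calc ((A : Matrix (Fin 2) (Fin 2) K) * B) * ((A : Matrix (Fin 2) (Fin 2) K) * B)
          = (A : Matrix (Fin 2) (Fin 2) K) * (((B : Matrix (Fin 2) (Fin 2) K) * A)
            * (B : Matrix (Fin 2) (Fin 2) K)) := by noncomm_ring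
        _ = (A : Matrix (Fin 2) (Fin 2) K) * ((-((A : Matrix (Fin 2) (Fin 2) K) * B))
            * (B : Matrix (Fin 2) (Fin 2) K)) := by rw [hBA]
        _ = -(((A : Matrix (Fin 2) (Fin 2) K) * A) * ((B : Matrix (Fin 2) (Fin 2) K) * B)) := by
            noncomm_ring
        _ = -((α • (1 : Matrix (Fin 2) (Fin 2) K)) * (β • (1 : Matrix (Fin 2) (Fin 2) K))) := by
            rw [hα, hβ]
        _ = (-(α*β)) • 1 := by
            rw [smul_mul_assoc, one_mul, smul_smul, ← neg_smul]
    have hsqV : ev * ev * (-(α*β)) = α := by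
      apply smul_one_inj'
      have h1 := conj_sq V A hα hevrel
      rw [smul_mul_assoc, mul_smul_comm, hABsq, smul_smul, smul_smul] at h1
      exact h1
    have hβrel : 1 + ev*ev*β = 0 := by
      rcases mul_eq_zero.mp (show α * (1 + ev*ev*β) = 0 by linear_combination -hsqV) with h | h
      · exact absurd h hαne
      · exact h
    have evne : ev ≠ 0 := by
      intro h0
      rw [h0] at hβrel
      simp at hβrel
    have cne : c ≠ 0 := by
      intro h0
      rw [h0] at hsqU
      simp at hsqU
      exact hαne hsqU.symm
    have hs1 : (ev/c)*(ev/c)*α = -1 := by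
      field_simp
      linear_combination (-(ev*ev))*hsqU + (c*c)*hβrel
    have hs2 : ev*ev*β = -1 := by linear_combination hβrel
    refine sum_sq_of_matrices h2 ((ev/c) • ((A : GL (Fin 2) K) : Matrix (Fin 2) (Fin 2) K))
      (ev • ((B : GL (Fin 2) K) : Matrix (Fin 2) (Fin 2) K)) ?_ ?_ ?_
    · rw [smul_mul_assoc, mul_smul_comm, hα, smul_smul, smul_smul, hs1]
    · rw [smul_mul_assoc, mul_smul_comm, hβ, smul_smul, smul_smul, hs2]
    · rw [smul_mul_assoc, mul_smul_comm, smul_smul, smul_mul_assoc, mul_smul_comm, smul_smul,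
        mul_comm ev (ev/c), ← smul_add, hanti, smul_zero]

end aux

private def pt1 : Equiv.Perm (Fin 4) := Equiv.swap 0 1 * Equiv.swap 2 3
private def pt2 : Equiv.Perm (Fin 4) := Equiv.swap 0 2 * Equiv.swap 1 3
private def psg : Equiv.Perm (Fin 4) := Equiv.swap 1 2 * Equiv.swap 2 3

private lemma pm1 : pt1 ∈ alternatingGroup (Fin 4) := by
  rw [Equiv.Perm.mem_alternatingGroup]; decide
private lemma pm2 : pt2 ∈ alternatingGroup (Fin 4) := by
  rw [Equiv.Perm.mem_alternatingGroup]; decide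
private lemma pms : psg ∈ alternatingGroup (Fin 4) := by
  rw [Equiv.Perm.mem_alternatingGroup]; decide

private def AT1 : alternatingGroup (Fin 4) := ⟨pt1, pm1⟩
private def AT2 : alternatingGroup (Fin 4) := ⟨pt2, pm2⟩
private def AS : alternatingGroup (Fin 4) := ⟨psg, pms⟩

private lemma aT1sq : AT1 * AT1 = 1 := Subtype.ext (by decide)
private lemma aT2sq : AT2 * AT2 = 1 := Subtype.ext (by decide)
private lemma aTcomm : AT1 * AT2 = AT2 * AT1 := Subtype.ext (by decide)
private lemma aconj1 : AS * AT1 * AS⁻¹ = AT2 := Subtype.ext (by decide)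
private lemma aconj2 : (AS * AS) * AT1 * (AS * AS)⁻¹ = AT1 * AT2 := Subtype.ext (by decide)
private lemma aT1ne : AT1 ≠ AT2 := fun h => (by decide : pt1 ≠ pt2) (congrArg Subtype.val h)
private lemma aT1ne1 : AT1 ≠ 1 := fun h => (by decide : pt1 ≠ 1) (congrArg Subtype.val h)
private lemma aT2ne1 : AT2 ≠ 1 := fun h => (by decide : pt2 ≠ 1) (congrArg Subtype.val h)


/-- If `char K ≠ 2, 3` and `PGL₂(K)` contains a subgroup isomorphic to the alternating
group `A₄`, then `−1` is a sum of two squares in `K`. -/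
theorem pgl2_A4_implies_sum_of_two_squares
    (K : Type*) [Field K] (h2 : (2 : K) ≠ 0) (h3 : (3 : K) ≠ 0)
    (H : Subgroup (PGL2 K)) (hH : Nonempty (H ≃* alternatingGroup (Fin 4))) :
    ∃ a b : K, a ^ 2 + b ^ 2 = -1 := by
  obtain ⟨e⟩ := hH
  set φ : alternatingGroup (Fin 4) →* PGL2 K := H.subtype.comp e.symm.toMonoidHom with hφ
  have hinj : Function.Injective φ := by
    rw [hφ, MonoidHom.coe_comp]
    exact (H.subtype_injective).comp e.symm.injective
  refine main_reduction h2 (φ AT1) (φ AT2) (φ AS) (φ (AS*AS)) ?_ ?_ ?_ ?_ ?_ ?_ ?_ ?_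
  · rw [← _root_.map_mul, aT1sq, _root_.map_one]
  · rw [← _root_.map_mul, aT2sq, _root_.map_one]
  · rw [← _root_.map_mul, ← _root_.map_mul, aTcomm]
  · rw [← _root_.map_inv, ← _root_.map_mul, ← _root_.map_mul, aconj1]
  · rw [← _root_.map_inv, ← _root_.map_mul, ← _root_.map_mul, aconj2, _root_.map_mul]
  · intro hcon
    exact aT1ne (hinj hcon)
  · intro hcon
    rw [← _root_.map_one φ] at hcon
    exact aT1ne1 (hinj hcon)
  · intro hcon
    rw [← _root_.map_one φ] at hcon
    exact aT2ne1 (hinj hcon)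
end

section
/- Let K be a field with char(K) ∉ {2,3,5}. If PGL₂(K) contains a subgroup isomorphic to the alternating group A₅, then 5 is a square in K and −1 is a sum of two squares in K. -/
section Aux

variable {K : Type*} [Field K]

private lemma CH2 (M : Matrix (Fin 2) (Fin 2) K) : M * M = M.trace • M - M.det • 1 := by
  ext i j
  fin_cases i <;> fin_cases j <;>
    simp [Matrix.mul_apply, Fin.sum_univ_two, Matrix.trace_fin_two, Matrix.det_fin_two,
      Matrix.one_apply] <;> ring

private lemma pow5aux (M : Matrix (Fin 2) (Fin 2) K) :
    M ^ 5 = (M.trace ^ 4 - 3 * M.trace ^ 2 * M.det + M.det ^ 2) • M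
      - (M.trace ^ 3 * M.det - 2 * M.trace * M.det ^ 2) • 1 := by
  set t := M.trace; set d := M.det
  have e2 : M ^ 2 = t • M - d • 1 := by rw [pow_two]; exact CH2 M
  have e3 : M ^ 3 = (t ^ 2 - d) • M - (t * d) • 1 := by
    rw [pow_succ, e2, sub_mul, smul_mul_assoc, smul_mul_assoc, one_mul, ← pow_two, e2]
    module
  have e5 : M ^ 5 = M ^ 3 * M ^ 2 := by rw [show (5 : ℕ) = 3 + 2 from rfl, pow_add]
  rw [e5, e3, e2, sub_mul, smul_mul_assoc, smul_mul_assoc, one_mul, mul_sub,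
    mul_smul_comm, mul_smul_comm, mul_one, ← pow_two, e2]
  module

private lemma scalar_of_mem_center {W : GL (Fin 2) K}
    (h : W ∈ Subgroup.center (GL (Fin 2) K)) :
    ∃ k : K, (W : Matrix (Fin 2) (Fin 2) K) = k • 1 := by
  have hc : ∀ t : Matrix.TransvectionStruct (Fin 2) K,
      Commute t.toMatrix (W : Matrix (Fin 2) (Fin 2) K) := by
    intro t
    have hu := (Subgroup.mem_center_iff.mp h)
      ⟨t.toMatrix, t.inv.toMatrix, t.mul_inv, t.inv_mul⟩
    have h2 := congrArg Units.val hu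
    push_cast at h2
    exact h2
  obtain ⟨k, hk⟩ := Matrix.mem_range_scalar_of_commute_transvectionStruct hc
  exact ⟨k, by rw [← hk, Matrix.scalar_apply, ← Matrix.smul_one_eq_diagonal]⟩

private lemma mem_center_of_scalar {W : GL (Fin 2) K} {k : K}
    (hk : (W : Matrix (Fin 2) (Fin 2) K) = k • 1) :
    W ∈ Subgroup.center (GL (Fin 2) K) := by
  refine Subgroup.mem_center_iff.mpr fun g => Units.ext ?_
  show (g : Matrix (Fin 2) (Fin 2) K) * W = (W : Matrix (Fin 2) (Fin 2) K) * g
  rw [hk, mul_smul_comm, smul_mul_assoc, mul_one, one_mul]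

/-- An anti-involution lift: trace zero. -/
private lemma trace_eq_zero_of_invol (h2 : (2 : K) ≠ 0) {M : Matrix (Fin 2) (Fin 2) K}
    (hdet : M.det = 1)
    (hsq : ∃ k : K, M * M = k • 1)
    (hns : ∀ k : K, M ≠ k • 1) :
    M.trace = 0 := by
  obtain ⟨k, hk⟩ := hsq
  have hdet2 : (k • (1 : Matrix (Fin 2) (Fin 2) K)).det = k ^ 2 := by
    rw [Matrix.det_smul, Matrix.det_one]
    simp
  have hk2 : k ^ 2 = 1 := by
    rw [← hdet2, ← hk, Matrix.det_mul, hdet, one_mul]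
  have hCH := CH2 M
  rw [hdet, hk] at hCH
  -- k • 1 = t • M - 1 • 1
  have h4 : M.trace • M = (k + 1) • (1 : Matrix (Fin 2) (Fin 2) K) := by
    rw [add_smul, hCH]
    abel
  have h5 : M.trace ^ 2 = (k + 1) ^ 2 := by
    have := congrArg Matrix.det h4
    rw [Matrix.det_smul, Matrix.det_smul, hdet, Matrix.det_one] at this
    simpa using this
  rcases mul_eq_zero.mp (show (k - 1) * (k + 1) = 0 by linear_combination hk2) with h | h
  · -- k = 1 : impossible
    have hk1 : k = 1 := by linear_combination h
    exfalso
    have ht4 : M.trace ^ 2 = 4 := by rw [h5, hk1]; norm_num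
    have htne : M.trace ≠ 0 := by
      intro h0
      rw [h0] at ht4
      have h0' : (2 : K) * 2 = 0 := by linear_combination -ht4
      rcases mul_eq_zero.mp h0' with hx | hx <;> exact h2 hx
    apply hns (M.trace⁻¹ * (k + 1))
    have := congrArg (fun N => M.trace⁻¹ • N) h4
    simpa [smul_smul, inv_mul_cancel₀ htne] using this
  · -- k = -1 : trace is zero
    have hk1 : k = -1 := by linear_combination h
    have ht0 : M.trace ^ 2 = 0 := by rw [h5, hk1]; ring
    exact (pow_eq_zero_iff (by norm_num : (2:ℕ) ≠ 0)).mp ht0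

end Aux

open scoped commutatorElement

/-- If `char K ∉ {2,3,5}` and `PGL₂(K)` contains a subgroup isomorphic to the
alternating group `A₅`, then `5` is a square in `K` and `−1` is a sum of two
squares in `K`. -/
theorem pgl2_A5_implies_sqrt5_and_sum_of_two_squares
    (K : Type*) [Field K] (h2 : (2 : K) ≠ 0) (h3 : (3 : K) ≠ 0) (h5 : (5 : K) ≠ 0)
    (H : Subgroup (PGL2 K)) (hH : Nonempty (H ≃* alternatingGroup (Fin 5))) :
    IsSquare (5 : K) ∧ ∃ a b : K, a ^ 2 + b ^ 2 = -1 := by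
  classical
  obtain ⟨e⟩ := hH
  set Z := Subgroup.center (GL (Fin 2) K) with hZ
  let π : GL (Fin 2) K →* PGL2 K := QuotientGroup.mk' Z
  have hπsurj : Function.Surjective π := QuotientGroup.mk'_surjective Z
  let φ : alternatingGroup (Fin 5) →* PGL2 K := H.subtype.comp e.symm.toMonoidHom
  have hφ : Function.Injective φ := H.subtype_injective.comp e.symm.injective
  -- helper: nonscalarity from nontriviality in the quotient
  have nonscalar : ∀ (W : GL (Fin 2) K), π W ≠ 1 →
      ∀ k : K, (W : Matrix (Fin 2) (Fin 2) K) ≠ k • 1 := by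
    intro W hW k hk
    exact hW ((QuotientGroup.eq_one_iff W).mpr (mem_center_of_scalar hk))
  -- helper: scalar matrix from triviality of a power
  have powscalar : ∀ (W : GL (Fin 2) K) (n : ℕ), π (W ^ n) = 1 →
      ∃ k : K, ((W : Matrix (Fin 2) (Fin 2) K)) ^ n = k • 1 := by
    intro W n hW
    obtain ⟨k, hk⟩ := scalar_of_mem_center ((QuotientGroup.eq_one_iff (W ^ n)).mp hW)
    exact ⟨k, by rw [← Units.val_pow_eq_pow_val]; exact hk⟩
  constructor
  · -- Part 1: order-5 element gives √5
    set p5 : Equiv.Perm (Fin 5) :=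
      (Equiv.swap 0 1 * Equiv.swap 1 2) * (Equiv.swap 2 3 * Equiv.swap 3 4) with hp5
    have hp5mem : p5 ∈ alternatingGroup (Fin 5) := by
      rw [Equiv.Perm.mem_alternatingGroup]; decide
    set x5 : alternatingGroup (Fin 5) := ⟨p5, hp5mem⟩ with hx5
    have hx5pow : x5 ^ 5 = 1 := by
      apply Subtype.ext; push_cast; show p5 ^ 5 = 1; rw [hp5]; decide
    have hx5ne : x5 ≠ 1 := by
      intro hh
      have := congrArg Subtype.val hh
      revert this; push_cast; show p5 = 1 → False; rw [hp5]; decide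
    obtain ⟨U, hU⟩ := hπsurj (φ x5)
    have hg1 : π U ≠ 1 := by
      rw [hU]
      intro hh
      exact hx5ne (hφ (by rw [hh, map_one]))
    have hg5 : π (U ^ 5) = 1 := by
      rw [map_pow, hU, ← map_pow, hx5pow, map_one]
    obtain ⟨k, hk⟩ := powscalar U 5 hg5
    set M : Matrix (Fin 2) (Fin 2) K := (U : Matrix (Fin 2) (Fin 2) K) with hM
    set t := M.trace with ht
    set d := M.det with hd
    have hdne : d ≠ 0 := by
      have : IsUnit M := ⟨U, rfl⟩
      exact ((Matrix.isUnit_iff_isUnit_det M).mp this).ne_zero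
    have hns := nonscalar U hg1
    have hp : t ^ 4 - 3 * t ^ 2 * d + d ^ 2 = 0 := by
      by_contra hp0
      have h51 := pow5aux M
      rw [hk, ← ht, ← hd] at h51
      -- k • 1 = p • M - q • 1
      have h52 : (t ^ 4 - 3 * t ^ 2 * d + d ^ 2) • M
          = (k + (t ^ 3 * d - 2 * t * d ^ 2)) • (1 : Matrix (Fin 2) (Fin 2) K) := by
        rw [add_smul k (t ^ 3 * d - 2 * t * d ^ 2), h51]
        abel
      apply hns ((t ^ 4 - 3 * t ^ 2 * d + d ^ 2)⁻¹ * (k + (t ^ 3 * d - 2 * t * d ^ 2)))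
      have := congrArg (fun N => (t ^ 4 - 3 * t ^ 2 * d + d ^ 2)⁻¹ • N) h52
      simpa [smul_smul, inv_mul_cancel₀ hp0] using this
    exact ⟨(2 * t ^ 2 - 3 * d) / d, by
      field_simp
      linear_combination (-4 : K) * hp⟩
  · -- Part 2: Klein four subgroup gives −1 as a sum of two squares
    set q1 : Equiv.Perm (Fin 5) := Equiv.swap 0 1 * Equiv.swap 2 3 with hq1
    set q2 : Equiv.Perm (Fin 5) := Equiv.swap 0 2 * Equiv.swap 1 3 with hq2
    set pu1 : Equiv.Perm (Fin 5) := Equiv.swap 0 1 * Equiv.swap 1 3 with hpu1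
    set pv1 : Equiv.Perm (Fin 5) := Equiv.swap 0 1 * Equiv.swap 1 2 with hpv1
    set pu2 : Equiv.Perm (Fin 5) := Equiv.swap 0 2 * Equiv.swap 2 3 with hpu2
    set pv2 : Equiv.Perm (Fin 5) := Equiv.swap 0 2 * Equiv.swap 2 1 with hpv2
    have hmq1 : q1 ∈ alternatingGroup (Fin 5) := by
      rw [Equiv.Perm.mem_alternatingGroup]; decide
    have hmq2 : q2 ∈ alternatingGroup (Fin 5) := by
      rw [Equiv.Perm.mem_alternatingGroup]; decide
    have hmu1 : pu1 ∈ alternatingGroup (Fin 5) := by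
      rw [Equiv.Perm.mem_alternatingGroup]; decide
    have hmv1 : pv1 ∈ alternatingGroup (Fin 5) := by
      rw [Equiv.Perm.mem_alternatingGroup]; decide
    have hmu2 : pu2 ∈ alternatingGroup (Fin 5) := by
      rw [Equiv.Perm.mem_alternatingGroup]; decide
    have hmv2 : pv2 ∈ alternatingGroup (Fin 5) := by
      rw [Equiv.Perm.mem_alternatingGroup]; decide
    set x1 : alternatingGroup (Fin 5) := ⟨q1, hmq1⟩ with hx1
    set x2 : alternatingGroup (Fin 5) := ⟨q2, hmq2⟩ with hx2
    set xu1 : alternatingGroup (Fin 5) := ⟨pu1, hmu1⟩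
    set xv1 : alternatingGroup (Fin 5) := ⟨pv1, hmv1⟩
    set xu2 : alternatingGroup (Fin 5) := ⟨pu2, hmu2⟩
    set xv2 : alternatingGroup (Fin 5) := ⟨pv2, hmv2⟩
    have hcomm1 : x1 = ⁅xu1, xv1⁆ := by
      apply Subtype.ext
      show q1 = _
      rw [commutatorElement_def]
      push_cast
      show q1 = pu1 * pv1 * pu1⁻¹ * pv1⁻¹; rw [hq1, hpu1, hpv1]; decide
    have hcomm2 : x2 = ⁅xu2, xv2⁆ := by
      apply Subtype.ext
      show q2 = _
      rw [commutatorElement_def]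
      push_cast
      show q2 = pu2 * pv2 * pu2⁻¹ * pv2⁻¹; rw [hq2, hpu2, hpv2]; decide
    -- lifts of the four auxiliary elements
    obtain ⟨U1, hU1⟩ := hπsurj (φ xu1)
    obtain ⟨V1, hV1⟩ := hπsurj (φ xv1)
    obtain ⟨U2, hU2⟩ := hπsurj (φ xu2)
    obtain ⟨V2, hV2⟩ := hπsurj (φ xv2)
    set W1 : GL (Fin 2) K := ⁅U1, V1⁆ with hW1def
    set W2 : GL (Fin 2) K := ⁅U2, V2⁆ with hW2def
    have hW1 : π W1 = φ x1 := by
      rw [hW1def, map_commutatorElement, hU1, hV1, ← map_commutatorElement, ← hcomm1]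
    have hW2 : π W2 = φ x2 := by
      rw [hW2def, map_commutatorElement, hU2, hV2, ← map_commutatorElement, ← hcomm2]
    -- determinants are 1
    have hdet : ∀ (A B : GL (Fin 2) K),
        ((⁅A, B⁆ : GL (Fin 2) K) : Matrix (Fin 2) (Fin 2) K).det = 1 := by
      intro A B
      have h : Matrix.GeneralLinearGroup.det ⁅A, B⁆ = 1 := by
        rw [map_commutatorElement]
        exact commutatorElement_eq_one_iff_commute.mpr (Commute.all _ _)
      have h' := congrArg Units.val h
      rw [← Matrix.GeneralLinearGroup.val_det_apply, h, Units.val_one]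
    have hdet1 : ((W1 : Matrix (Fin 2) (Fin 2) K)).det = 1 := hdet U1 V1
    have hdet2 : ((W2 : Matrix (Fin 2) (Fin 2) K)).det = 1 := hdet U2 V2
    -- involution facts in the quotient
    have key : ∀ (W : GL (Fin 2) K) (x : alternatingGroup (Fin 5)), π W = φ x →
        x ^ 2 = 1 → x ≠ 1 → ((W : Matrix (Fin 2) (Fin 2) K)).det = 1 →
        ((W : Matrix (Fin 2) (Fin 2) K)).trace = 0 ∧
        ((W : Matrix (Fin 2) (Fin 2) K)).det = 1 := by
      intro W x hWx hxsq hxne hWdet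
      refine ⟨?_, hWdet⟩
      have hWne : π W ≠ 1 := by
        rw [hWx]
        intro hh
        exact hxne (hφ (by rw [hh, map_one]))
      have hsqc : π (W ^ 2) = 1 := by
        rw [map_pow, hWx, ← map_pow, hxsq, map_one]
      obtain ⟨k, hk⟩ := powscalar W 2 hsqc
      refine trace_eq_zero_of_invol h2 hWdet ⟨k, ?_⟩ (nonscalar W hWne)
      rw [← hk, pow_two]
    have hx1sq : x1 ^ 2 = 1 := by apply Subtype.ext; push_cast; show q1 ^ 2 = 1; rw [hq1]; decide
    have hx2sq : x2 ^ 2 = 1 := by apply Subtype.ext; push_cast; show q2 ^ 2 = 1; rw [hq2]; decide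
    have hx12sq : (x1 * x2) ^ 2 = 1 := by apply Subtype.ext; push_cast; show (q1 * q2) ^ 2 = 1; rw [hq1, hq2]; decide
    have hx1ne : x1 ≠ 1 := by
      intro hh; have := congrArg Subtype.val hh; revert this; push_cast; show q1 = 1 → False; rw [hq1]; decide
    have hx2ne : x2 ≠ 1 := by
      intro hh; have := congrArg Subtype.val hh; revert this; push_cast; show q2 = 1 → False; rw [hq2]; decide
    have hx12ne : x1 * x2 ≠ 1 := by
      intro hh; have := congrArg Subtype.val hh; revert this; push_cast; show q1 * q2 = 1 → False; rw [hq1, hq2]; decide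
    obtain ⟨htr1, -⟩ := key W1 x1 hW1 hx1sq hx1ne hdet1
    obtain ⟨htr2, -⟩ := key W2 x2 hW2 hx2sq hx2ne hdet2
    have hW12 : π (W1 * W2) = φ (x1 * x2) := by rw [map_mul, hW1, hW2, map_mul]
    have hdet12 : (((W1 * W2 : GL (Fin 2) K) : Matrix (Fin 2) (Fin 2) K)).det = 1 := by
      push_cast
      rw [Matrix.det_mul, hdet1, hdet2, one_mul]
    obtain ⟨htr12, -⟩ := key (W1 * W2) (x1 * x2) hW12 hx12sq hx12ne hdet12
    -- translate to entries
    set M1 : Matrix (Fin 2) (Fin 2) K := (W1 : Matrix (Fin 2) (Fin 2) K) with hM1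
    set M2 : Matrix (Fin 2) (Fin 2) K := (W2 : Matrix (Fin 2) (Fin 2) K) with hM2
    have htr12' : (M1 * M2).trace = 0 := by
      rw [hM1, hM2, ← Units.val_mul]
      exact htr12
    set a := M1 0 0 with hA00
    set b := M1 0 1
    set c := M1 1 0
    set a' := M1 1 1
    set d := M2 0 0
    set ee := M2 0 1
    set f := M2 1 0
    set d' := M2 1 1
    have t1 : a + a' = 0 := by simpa [Matrix.trace_fin_two] using htr1
    have t2 : d + d' = 0 := by simpa [Matrix.trace_fin_two] using htr2
    have dt1 : a * a' - b * c = 1 := by simpa [Matrix.det_fin_two] using hdet1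
    have dt2 : d * d' - ee * f = 1 := by simpa [Matrix.det_fin_two] using hdet2
    have t12 : a * d + b * f + (c * ee + a' * d') = 0 := by
      have := htr12'
      simpa [Matrix.trace_fin_two, Matrix.mul_apply, Fin.sum_univ_two, add_assoc] using this
    have ha' : a' = -a := by linear_combination t1
    have hd' : d' = -d := by linear_combination t2
    rw [ha'] at dt1 t12
    rw [hd'] at dt2 t12
    by_cases hb : b = 0
    · refine ⟨a, 0, ?_⟩
      rw [hb] at dt1
      linear_combination -dt1
    · refine ⟨(b * d - a * ee) / b, ee / b, ?_⟩
      field_simp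
      linear_combination (-(ee ^ 2)) * dt1 + (-(b ^ 2)) * dt2 + (-(b * ee)) * t12
end

section
/- Let K be a field of characteristic ≠ 2 in which −1 is a sum of two squares and 5 is a square. Then the special orthogonal group SO₃(K) of the standard quadratic form x² + y² + z² contains a subgroup isomorphic to A₅. -/
set_option maxHeartbeats 4000000
set_option maxRecDepth 40000

open Matrix Equiv

def tbl0 : List (Nat × Matrix (Fin 3) (Fin 3) (Zsqrtd 5)) := [(430, !![⟨4,0⟩,⟨0,0⟩,⟨0,0⟩;⟨0,0⟩,⟨4,0⟩,⟨0,0⟩;⟨0,0⟩,⟨0,0⟩,⟨4,0⟩]), (580, !![⟨0,0⟩,⟨0,0⟩,⟨-4,0⟩;⟨-4,0⟩,⟨0,0⟩,⟨0,0⟩;⟨0,0⟩,⟨4,0⟩,⟨0,0⟩]), (355, !![⟨0,0⟩,⟨-4,0⟩,⟨0,0⟩;⟨0,0⟩,⟨0,0⟩,⟨4,0⟩;⟨-4,0⟩,⟨0,0⟩,⟨0,0⟩]), (535, !![⟨-1,1⟩,⟨2,0⟩,⟨-1,-1⟩;⟨2,0⟩,⟨-1,-1⟩,⟨1,-1⟩;⟨-1,-1⟩,⟨1,-1⟩,⟨-2,0⟩]),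 (210, !![⟨1,1⟩,⟨1,-1⟩,⟨2,0⟩;⟨-1,1⟩,⟨-2,0⟩,⟨-1,-1⟩;⟨2,0⟩,⟨1,1⟩,⟨1,-1⟩]), (485, !![⟨-2,0⟩,⟨-1,-1⟩,⟨1,-1⟩;⟨1,1⟩,⟨1,-1⟩,⟨-2,0⟩;⟨-1,1⟩,⟨-2,0⟩,⟨1,1⟩]), (290, !![⟨1,1⟩,⟨-1,1⟩,⟨2,0⟩;⟨1,-1⟩,⟨-2,0⟩,⟨1,1⟩;⟨2,0⟩,⟨-1,-1⟩,⟨1,-1⟩]), (565, !![⟨1,-1⟩,⟨2,0⟩,⟨-1,-1⟩;⟨2,0⟩,⟨1,1⟩,⟨-1,1⟩;⟨1,1⟩,⟨1,-1⟩,⟨-2,0⟩]), (240, !![⟨-2,0⟩,⟨-1,-1⟩,⟨-1,1⟩;⟨-1,-1⟩,⟨-1,1⟩,⟨-2,0⟩;⟨-1,1⟩,⟨-2,0⟩,⟨-1,-1⟩]), (420, !![⟨-2,0⟩,⟨1,1⟩,⟨-1,1⟩;⟨-1,-1⟩,⟨1,-1⟩,⟨-2,0⟩;⟨1,-1⟩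,⟨-2,0⟩,⟨1,1⟩])]
def tbl1 : List (Nat × Matrix (Fin 3) (Fin 3) (Zsqrtd 5)) := [(195, !![⟨1,-1⟩,⟨2,0⟩,⟨1,1⟩;⟨2,0⟩,⟨1,1⟩,⟨1,-1⟩;⟨-1,-1⟩,⟨-1,1⟩,⟨-2,0⟩]), (345, !![⟨-1,-1⟩,⟨-1,1⟩,⟨2,0⟩;⟨-1,1⟩,⟨-2,0⟩,⟨1,1⟩;⟨2,0⟩,⟨1,1⟩,⟨-1,1⟩]), (551, !![⟨-1,1⟩,⟨2,0⟩,⟨1,1⟩;⟨2,0⟩,⟨-1,-1⟩,⟨-1,1⟩;⟨1,1⟩,⟨-1,1⟩,⟨-2,0⟩]), (326, !![⟨-1,-1⟩,⟨1,-1⟩,⟨2,0⟩;⟨1,-1⟩,⟨-2,0⟩,⟨-1,-1⟩;⟨2,0⟩,⟨-1,-1⟩,⟨-1,1⟩]), (476, !![⟨-2,0⟩,⟨1,1⟩,⟨1,-1⟩;⟨1,1⟩,⟨-1,1⟩,⟨-2,0⟩;⟨1,-1⟩,⟨-2,0⟩,⟨-1,-1⟩]), (386, !![⟨1,-1⟩,⟨-2,0⟩,⟨-1,-1⟩;⟨-2,0⟩,⟨1,1⟩,⟨1,-1⟩;⟨1,1⟩,⟨-1,1⟩,⟨-2,0⟩]),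 (586, !![⟨2,0⟩,⟨-1,-1⟩,⟨-1,1⟩;⟨-1,-1⟩,⟨1,-1⟩,⟨2,0⟩;⟨1,-1⟩,⟨-2,0⟩,⟨-1,-1⟩]), (111, !![⟨1,1⟩,⟨-1,1⟩,⟨-2,0⟩;⟨-1,1⟩,⟨2,0⟩,⟨1,1⟩;⟨2,0⟩,⟨-1,-1⟩,⟨-1,1⟩]), (516, !![⟨-1,-1⟩,⟨1,-1⟩,⟨2,0⟩;⟨-1,1⟩,⟨2,0⟩,⟨1,1⟩;⟨-2,0⟩,⟨1,1⟩,⟨1,-1⟩]), (66, !![⟨-2,0⟩,⟨1,1⟩,⟨1,-1⟩;⟨-1,-1⟩,⟨1,-1⟩,⟨2,0⟩;⟨-1,1⟩,⟨2,0⟩,⟨1,1⟩])]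
def tbl2 : List (Nat × Matrix (Fin 3) (Fin 3) (Zsqrtd 5)) := [(366, !![⟨-1,1⟩,⟨2,0⟩,⟨1,1⟩;⟨-2,0⟩,⟨1,1⟩,⟨1,-1⟩;⟨-1,-1⟩,⟨1,-1⟩,⟨2,0⟩]), (271, !![⟨2,0⟩,⟨-1,-1⟩,⟨-1,1⟩;⟨1,1⟩,⟨-1,1⟩,⟨-2,0⟩;⟨-1,1⟩,⟨2,0⟩,⟨1,1⟩]), (446, !![⟨1,1⟩,⟨-1,1⟩,⟨-2,0⟩;⟨1,-1⟩,⟨-2,0⟩,⟨-1,-1⟩;⟨-2,0⟩,⟨1,1⟩,⟨1,-1⟩]), (96, !![⟨1,-1⟩,⟨-2,0⟩,⟨-1,-1⟩;⟨2,0⟩,⟨-1,-1⟩,⟨-1,1⟩;⟨-1,-1⟩,⟨1,-1⟩,⟨2,0⟩]), (402, !![⟨1,-1⟩,⟨-2,0⟩,⟨1,1⟩;⟨-2,0⟩,⟨1,1⟩,⟨-1,1⟩;⟨-1,-1⟩,⟨1,-1⟩,⟨-2,0⟩]), (577, !![⟨2,0⟩,⟨1,1⟩,⟨-1,1⟩;⟨-1,-1⟩,⟨-1,1⟩,⟨2,0⟩;⟨-1,1⟩,⟨-2,0⟩,⟨1,1⟩]),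 (227, !![⟨-1,-1⟩,⟨-1,1⟩,⟨-2,0⟩;⟨1,-1⟩,⟨2,0⟩,⟨1,1⟩;⟨2,0⟩,⟨1,1⟩,⟨1,-1⟩]), (507, !![⟨-4,0⟩,⟨0,0⟩,⟨0,0⟩;⟨0,0⟩,⟨-4,0⟩,⟨0,0⟩;⟨0,0⟩,⟨0,0⟩,⟨4,0⟩]), (82, !![⟨0,0⟩,⟨4,0⟩,⟨0,0⟩;⟨0,0⟩,⟨0,0⟩,⟨-4,0⟩;⟨-4,0⟩,⟨0,0⟩,⟨0,0⟩]), (482, !![⟨0,0⟩,⟨0,0⟩,⟨4,0⟩;⟨4,0⟩,⟨0,0⟩,⟨0,0⟩;⟨0,0⟩,⟨4,0⟩,⟨0,0⟩])]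
def tbl3 : List (Nat × Matrix (Fin 3) (Fin 3) (Zsqrtd 5)) := [(142, !![⟨-1,1⟩,⟨-2,0⟩,⟨-1,-1⟩;⟨-2,0⟩,⟨-1,-1⟩,⟨-1,1⟩;⟨-1,-1⟩,⟨-1,1⟩,⟨-2,0⟩]), (542, !![⟨2,0⟩,⟨-1,-1⟩,⟨1,-1⟩;⟨1,1⟩,⟨-1,1⟩,⟨2,0⟩;⟨1,-1⟩,⟨-2,0⟩,⟨1,1⟩]), (117, !![⟨1,1⟩,⟨1,-1⟩,⟨-2,0⟩;⟨1,-1⟩,⟨2,0⟩,⟨-1,-1⟩;⟨2,0⟩,⟨1,1⟩,⟨-1,1⟩]), (397, !![⟨-1,1⟩,⟨-2,0⟩,⟨1,1⟩;⟨-2,0⟩,⟨-1,-1⟩,⟨1,-1⟩;⟨1,1⟩,⟨1,-1⟩,⟨-2,0⟩]), (47, !![⟨-1,-1⟩,⟨1,-1⟩,⟨-2,0⟩;⟨-1,1⟩,⟨2,0⟩,⟨-1,-1⟩;⟨2,0⟩,⟨-1,-1⟩,⟨1,-1⟩]), (222, !![⟨2,0⟩,⟨1,1⟩,⟨1,-1⟩;⟨1,1⟩,⟨1,-1⟩,⟨2,0⟩;⟨-1,1⟩,⟨-2,0⟩,⟨-1,-1⟩]),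 (528, !![⟨1,1⟩,⟨-1,1⟩,⟨2,0⟩;⟨-1,1⟩,⟨2,0⟩,⟨-1,-1⟩;⟨-2,0⟩,⟨1,1⟩,⟨-1,1⟩]), (178, !![⟨-2,0⟩,⟨-1,-1⟩,⟨-1,1⟩;⟨1,1⟩,⟨1,-1⟩,⟨2,0⟩;⟨1,-1⟩,⟨2,0⟩,⟨1,1⟩]), (353, !![⟨1,-1⟩,⟨2,0⟩,⟨-1,-1⟩;⟨-2,0⟩,⟨-1,-1⟩,⟨1,-1⟩;⟨-1,-1⟩,⟨-1,1⟩,⟨2,0⟩]), (258, !![⟨0,0⟩,⟨0,0⟩,⟨-4,0⟩;⟨4,0⟩,⟨0,0⟩,⟨0,0⟩;⟨0,0⟩,⟨-4,0⟩,⟨0,0⟩])]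
def tbl4 : List (Nat × Matrix (Fin 3) (Fin 3) (Zsqrtd 5)) := [(558, !![⟨0,0⟩,⟨-4,0⟩,⟨0,0⟩;⟨0,0⟩,⟨0,0⟩,⟨-4,0⟩;⟨4,0⟩,⟨0,0⟩,⟨0,0⟩]), (108, !![⟨4,0⟩,⟨0,0⟩,⟨0,0⟩;⟨0,0⟩,⟨-4,0⟩,⟨0,0⟩;⟨0,0⟩,⟨0,0⟩,⟨-4,0⟩]), (513, !![⟨-1,-1⟩,⟨-1,1⟩,⟨2,0⟩;⟨1,-1⟩,⟨2,0⟩,⟨-1,-1⟩;⟨-2,0⟩,⟨-1,-1⟩,⟨1,-1⟩]), (38, !![⟨-2,0⟩,⟨1,1⟩,⟨-1,1⟩;⟨1,1⟩,⟨-1,1⟩,⟨2,0⟩;⟨-1,1⟩,⟨2,0⟩,⟨-1,-1⟩]), (238, !![⟨1,-1⟩,⟨2,0⟩,⟨1,1⟩;⟨-2,0⟩,⟨-1,-1⟩,⟨-1,1⟩;⟨1,1⟩,⟨1,-1⟩,⟨2,0⟩]), (148, !![⟨1,1⟩,⟨1,-1⟩,⟨2,0⟩;⟨1,-1⟩,⟨2,0⟩,⟨1,1⟩;⟨-2,0⟩,⟨-1,-1⟩,⟨-1,1⟩]),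 (298, !![⟨-1,1⟩,⟨2,0⟩,⟨-1,-1⟩;⟨-2,0⟩,⟨1,1⟩,⟨-1,1⟩;⟨1,1⟩,⟨-1,1⟩,⟨2,0⟩]), (73, !![⟨-2,0⟩,⟨-1,-1⟩,⟨1,-1⟩;⟨-1,-1⟩,⟨-1,1⟩,⟨2,0⟩;⟨1,-1⟩,⟨2,0⟩,⟨-1,-1⟩]), (279, !![⟨2,0⟩,⟨-1,-1⟩,⟨1,-1⟩;⟨-1,-1⟩,⟨1,-1⟩,⟨-2,0⟩;⟨-1,1⟩,⟨2,0⟩,⟨-1,-1⟩]), (429, !![⟨1,1⟩,⟨1,-1⟩,⟨-2,0⟩;⟨-1,1⟩,⟨-2,0⟩,⟨1,1⟩;⟨-2,0⟩,⟨-1,-1⟩,⟨1,-1⟩])]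
def tbl5 : List (Nat × Matrix (Fin 3) (Fin 3) (Zsqrtd 5)) := [(204, !![⟨-1,1⟩,⟨-2,0⟩,⟨-1,-1⟩;⟨2,0⟩,⟨1,1⟩,⟨1,-1⟩;⟨1,1⟩,⟨1,-1⟩,⟨2,0⟩]), (384, !![⟨0,0⟩,⟨4,0⟩,⟨0,0⟩;⟨0,0⟩,⟨0,0⟩,⟨4,0⟩;⟨4,0⟩,⟨0,0⟩,⟨0,0⟩]), (59, !![⟨0,0⟩,⟨0,0⟩,⟨4,0⟩;⟨-4,0⟩,⟨0,0⟩,⟨0,0⟩;⟨0,0⟩,⟨-4,0⟩,⟨0,0⟩]), (334, !![⟨-4,0⟩,⟨0,0⟩,⟨0,0⟩;⟨0,0⟩,⟨4,0⟩,⟨0,0⟩;⟨0,0⟩,⟨0,0⟩,⟨-4,0⟩]), (139, !![⟨2,0⟩,⟨1,1⟩,⟨1,-1⟩;⟨-1,-1⟩,⟨-1,1⟩,⟨-2,0⟩;⟨1,-1⟩,⟨2,0⟩,⟨1,1⟩]), (414, !![⟨-1,-1⟩,⟨1,-1⟩,⟨-2,0⟩;⟨1,-1⟩,⟨-2,0⟩,⟨1,1⟩;⟨-2,0⟩,⟨1,1⟩,⟨-1,1⟩]),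 (89, !![⟨-1,1⟩,⟨-2,0⟩,⟨1,1⟩;⟨2,0⟩,⟨1,1⟩,⟨-1,1⟩;⟨-1,-1⟩,⟨-1,1⟩,⟨2,0⟩]), (269, !![⟨2,0⟩,⟨1,1⟩,⟨-1,1⟩;⟨1,1⟩,⟨1,-1⟩,⟨-2,0⟩;⟨1,-1⟩,⟨2,0⟩,⟨-1,-1⟩]), (44, !![⟨1,-1⟩,⟨-2,0⟩,⟨1,1⟩;⟨2,0⟩,⟨-1,-1⟩,⟨1,-1⟩;⟨1,1⟩,⟨-1,1⟩,⟨2,0⟩]), (194, !![⟨-1,-1⟩,⟨-1,1⟩,⟨-2,0⟩;⟨-1,1⟩,⟨-2,0⟩,⟨-1,-1⟩;⟨-2,0⟩,⟨-1,-1⟩,⟨-1,1⟩])]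

def tbl : List (Nat × Matrix (Fin 3) (Fin 3) (Zsqrtd 5)) :=
  tbl0 ++ tbl1 ++ tbl2 ++ tbl3 ++ tbl4 ++ tbl5

def keys : List Nat := tbl.map Prod.fst

def Fk (k : Nat) : Matrix (Fin 3) (Fin 3) (Zsqrtd 5) :=
  (tbl.lookup k).getD ((4 : Zsqrtd 5) • 1)

def pkey (s : Equiv.Perm (Fin 5)) : Nat :=
  (s 0).val + 5 * (s 1).val + 25 * (s 2).val + 125 * (s 3).val

def dig (k i : Nat) : Nat :=
  if i = 4 then 10 - (k % 5 + k / 5 % 5 + k / 25 % 5 + k / 125 % 5) else k / 5 ^ i % 5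

def compKey (ka kb : Nat) : Nat :=
  dig ka (dig kb 0) + 5 * dig ka (dig kb 1) + 25 * dig ka (dig kb 2) + 125 * dig ka (dig kb 3)

def px : Equiv.Perm (Fin 5) := Equiv.swap 1 2 * Equiv.swap 3 4
def py : Equiv.Perm (Fin 5) := finRotate 5
def px0 : Equiv.Perm (Fin 5) := Equiv.swap 0 3 * Equiv.swap 2 4

def tclist : List (Equiv.Perm (Fin 5)) := [px*py*py*py*px*py*px, py*px*py*py*py*px, px*py*px*py*py*py*px, py*py*py*px*py*px, px*py*py*py*px*py, px*py*px*py*py*py, py*px*py*py*py, py*py*py*px*py, py*py*px*py*py*py*px, py*px, py*px*py*py*py*px*py, px*py*py*px*py*py*py, py*py*py*px*py*py*py, px*py, py*px*py*px, py*py*px*py*py, px*py*py*py*px*py*py, px*py*py*px*py*py*px, py*py*py*px*py*py*px, px*py*px*py]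

lemma dig_pkey : ∀ s : Equiv.Perm (Fin 5), ∀ j : Fin 5, dig (pkey s) j.val = (s j).val := by
  decide

lemma sign_keys : ∀ s : Equiv.Perm (Fin 5), Equiv.Perm.sign s = 1 → pkey s ∈ keys := by
  decide

lemma base_mul : ∀ ka ∈ keys, ∀ kb ∈ [535, 586],
    Fk ka * Fk kb = (4 : Zsqrtd 5) • Fk (compKey ka kb) := by decide

lemma orthT : ∀ k ∈ keys, (Fk k)ᵀ * Fk k = (16 : Zsqrtd 5) • 1 := by decide

lemma orthT' : ∀ k ∈ keys, Fk k * (Fk k)ᵀ = (16 : Zsqrtd 5) • 1 := by decide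

lemma inv_trans : ∀ s : Equiv.Perm (Fin 5), pkey s ∈ keys → Fk (pkey s⁻¹) = (Fk (pkey s))ᵀ := by
  decide

lemma Fk_one : Fk (pkey 1) = (4 : Zsqrtd 5) • 1 := by decide

lemma Fk_g0 : Fk (pkey px0) 1 1 = -4 := by decide

lemma g0_sign : Equiv.Perm.sign px0 = 1 := by decide

lemma px_sign : Equiv.Perm.sign px = 1 := by decide
lemma py_sign : Equiv.Perm.sign py = 1 := by decide

lemma tc_mem : ∀ s : Equiv.Perm (Fin 5), s.support.card = 3 → s ∈ tclist := by decide

lemma pkey_px : pkey px = 535 := by decide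
lemma pkey_py : pkey py = 586 := by decide

lemma keymul (a b : Equiv.Perm (Fin 5)) : pkey (a * b) = compKey (pkey a) (pkey b) := by
  have h0 : dig (pkey b) 0 = (b 0).val := dig_pkey b 0
  have h1 : dig (pkey b) 1 = (b 1).val := dig_pkey b 1
  have h2 : dig (pkey b) 2 = (b 2).val := dig_pkey b 2
  have h3 : dig (pkey b) 3 = (b 3).val := dig_pkey b 3
  unfold compKey
  rw [h0, h1, h2, h3, dig_pkey a (b 0), dig_pkey a (b 1), dig_pkey a (b 2), dig_pkey a (b 3)]
  simp [pkey, Equiv.Perm.mul_apply]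

lemma tc_closure : ∀ s ∈ tclist, s ∈ Subgroup.closure ({px, py} : Set (Equiv.Perm (Fin 5))) := by
  have hx : px ∈ Subgroup.closure ({px, py} : Set (Equiv.Perm (Fin 5))) :=
    Subgroup.subset_closure (by simp)
  have hy : py ∈ Subgroup.closure ({px, py} : Set (Equiv.Perm (Fin 5))) :=
    Subgroup.subset_closure (by simp)
  intro s hs
  simp only [tclist, List.mem_cons, List.not_mem_nil, or_false] at hs
  rcases hs with rfl|rfl|rfl|rfl|rfl|rfl|rfl|rfl|rfl|rfl|rfl|rfl|rfl|rfl|rfl|rfl|rfl|rfl|rfl|rfl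
  · exact mul_mem (mul_mem (mul_mem (mul_mem (mul_mem (mul_mem (hx) hy) hy) hy) hx) hy) hx
  · exact mul_mem (mul_mem (mul_mem (mul_mem (mul_mem (hy) hx) hy) hy) hy) hx
  · exact mul_mem (mul_mem (mul_mem (mul_mem (mul_mem (mul_mem (hx) hy) hx) hy) hy) hy) hx
  · exact mul_mem (mul_mem (mul_mem (mul_mem (mul_mem (hy) hy) hy) hx) hy) hx
  · exact mul_mem (mul_mem (mul_mem (mul_mem (mul_mem (hx) hy) hy) hy) hx) hy
  · exact mul_mem (mul_mem (mul_mem (mul_mem (mul_mem (hx) hy) hx) hy) hy) hy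
  · exact mul_mem (mul_mem (mul_mem (mul_mem (hy) hx) hy) hy) hy
  · exact mul_mem (mul_mem (mul_mem (mul_mem (hy) hy) hy) hx) hy
  · exact mul_mem (mul_mem (mul_mem (mul_mem (mul_mem (mul_mem (hy) hy) hx) hy) hy) hy) hx
  · exact mul_mem (hy) hx
  · exact mul_mem (mul_mem (mul_mem (mul_mem (mul_mem (mul_mem (hy) hx) hy) hy) hy) hx) hy
  · exact mul_mem (mul_mem (mul_mem (mul_mem (mul_mem (mul_mem (hx) hy) hy) hx) hy) hy) hy
  · exact mul_mem (mul_mem (mul_mem (mul_mem (mul_mem (mul_mem (hy) hy) hy) hx) hy) hy) hy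
  · exact mul_mem (hx) hy
  · exact mul_mem (mul_mem (mul_mem (hy) hx) hy) hx
  · exact mul_mem (mul_mem (mul_mem (mul_mem (hy) hy) hx) hy) hy
  · exact mul_mem (mul_mem (mul_mem (mul_mem (mul_mem (mul_mem (hx) hy) hy) hy) hx) hy) hy
  · exact mul_mem (mul_mem (mul_mem (mul_mem (mul_mem (mul_mem (hx) hy) hy) hx) hy) hy) hx
  · exact mul_mem (mul_mem (mul_mem (mul_mem (mul_mem (mul_mem (hy) hy) hy) hx) hy) hy) hx
  · exact mul_mem (mul_mem (mul_mem (hx) hy) hx) hy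
lemma A5_le_closure :
    alternatingGroup (Fin 5) ≤ Subgroup.closure ({px, py} : Set (Equiv.Perm (Fin 5))) := by
  rw [← Equiv.Perm.closure_three_cycles_eq_alternating]
  refine (Subgroup.closure_le _).mpr ?_
  intro s hs
  exact tc_closure s (tc_mem s (card_support_eq_three_iff.mpr hs))

lemma closure_le_A5 :
    Subgroup.closure ({px, py} : Set (Equiv.Perm (Fin 5))) ≤ alternatingGroup (Fin 5) := by
  refine (Subgroup.closure_le _).mpr ?_
  intro s hs
  simp only [Set.mem_insert_iff, Set.mem_singleton_iff] at hs
  rcases hs with rfl | rfl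
  · exact Equiv.Perm.mem_alternatingGroup.mpr px_sign
  · exact Equiv.Perm.mem_alternatingGroup.mpr py_sign

lemma mem_keys {s : Equiv.Perm (Fin 5)} (h : s ∈ alternatingGroup (Fin 5)) : pkey s ∈ keys :=
  sign_keys s (Equiv.Perm.mem_alternatingGroup.mp h)


/-- universe-polymorphic version of `Zsqrtd.lift` for `d = 5` -/
def zlift {K : Type*} [CommRing K] (r : K) (hr5 : r * r = 5) : Zsqrtd 5 →+* K where
  toFun a := (a.re : K) + (a.im : K) * r
  map_zero' := by simp
  map_one' := by simp
  map_add' a b := by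
    simp only [Zsqrtd.re_add, Zsqrtd.im_add]
    push_cast
    ring
  map_mul' a b := by
    simp only [Zsqrtd.re_mul, Zsqrtd.im_mul]
    push_cast
    linear_combination (-(a.im : K)) * (b.im : K) * hr5

section KLevel

variable {K : Type*} [Field K] (ψ : Zsqrtd 5 →+* K)

/-- the scaled matrix over `K` attached to a permutation -/
def fmat (s : Equiv.Perm (Fin 5)) : Matrix (Fin 3) (Fin 3) K :=
  (4 : K)⁻¹ • (Fk (pkey s)).map ψ

lemma map_smul_lit (c : Zsqrtd 5) (A : Matrix (Fin 3) (Fin 3) (Zsqrtd 5)) :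
    (c • A).map ψ = ψ c • A.map ψ := by
  ext i j
  simp [Matrix.map_apply, Matrix.smul_apply, smul_eq_mul, _root_.map_mul]

lemma fm_step (h4 : (4 : K) ≠ 0) {a b : Equiv.Perm (Fin 5)}
    (h : Fk (pkey a) * Fk (pkey b) = (4 : Zsqrtd 5) • Fk (compKey (pkey a) (pkey b))) :
    fmat ψ a * fmat ψ b = fmat ψ (a * b) := by
  unfold fmat
  rw [smul_mul_assoc, mul_smul_comm, smul_smul, ← Matrix.map_mul (f := ψ), h, ← keymul,
    map_smul_lit, map_ofNat, smul_smul]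
  congr 1
  field_simp

lemma fm_one (h4 : (4 : K) ≠ 0) : fmat ψ (1 : Equiv.Perm (Fin 5)) = (1 : Matrix (Fin 3) (Fin 3) K) := by
  unfold fmat
  rw [Fk_one, map_smul_lit, map_ofNat, Matrix.map_one _ (map_zero ψ) (map_one ψ), smul_smul,
    inv_mul_cancel₀ h4, one_smul]

lemma fm_inv {s : Equiv.Perm (Fin 5)} (hs : pkey s ∈ keys) :
    fmat ψ s⁻¹ = (fmat ψ s)ᵀ := by
  unfold fmat
  rw [inv_trans s hs, Matrix.transpose_smul, Matrix.transpose_map]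

lemma fm_orth (h4 : (4 : K) ≠ 0) {s : Equiv.Perm (Fin 5)} (hs : pkey s ∈ keys) :
    (fmat ψ s)ᵀ * fmat ψ s = 1 := by
  unfold fmat
  rw [Matrix.transpose_smul, ← Matrix.transpose_map, smul_mul_assoc, mul_smul_comm, smul_smul,
    ← Matrix.map_mul (f := ψ), orthT _ hs, map_smul_lit, map_ofNat,
    Matrix.map_one _ (map_zero ψ) (map_one ψ), smul_smul]
  rw [show (4 : K)⁻¹ * (4 : K)⁻¹ * 16 = 1 by field_simp; norm_num, one_smul]

lemma fm_orth' (h4 : (4 : K) ≠ 0) {s : Equiv.Perm (Fin 5)} (hs : pkey s ∈ keys) :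
    fmat ψ s * (fmat ψ s)ᵀ = 1 := by
  unfold fmat
  rw [Matrix.transpose_smul, ← Matrix.transpose_map, smul_mul_assoc, mul_smul_comm, smul_smul,
    ← Matrix.map_mul (f := ψ), orthT' _ hs, map_smul_lit, map_ofNat,
    Matrix.map_one _ (map_zero ψ) (map_one ψ), smul_smul]
  rw [show (4 : K)⁻¹ * (4 : K)⁻¹ * 16 = 1 by field_simp; norm_num, one_smul]

lemma fm_mul (h4 : (4 : K) ≠ 0) : ∀ b ∈ alternatingGroup (Fin 5), ∀ a ∈ alternatingGroup (Fin 5),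
    fmat ψ a * fmat ψ b = fmat ψ (a * b) := by
  intro b hb
  have hb' : b ∈ Subgroup.closure ({px, py} : Set (Equiv.Perm (Fin 5))) := A5_le_closure hb
  refine Subgroup.closure_induction
    (p := fun c _ => ∀ a ∈ alternatingGroup (Fin 5), fmat ψ a * fmat ψ c = fmat ψ (a * c))
    ?_ ?_ ?_ ?_ hb'
  · -- generators
    intro c hc a ha
    have hka : pkey a ∈ keys := mem_keys ha
    have hkc : pkey c ∈ [535, 586] := by
      simp only [Set.mem_insert_iff, Set.mem_singleton_iff] at hc
      rcases hc with rfl | rfl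
      · rw [pkey_px]; simp
      · rw [pkey_py]; simp
    exact fm_step ψ h4 (base_mul _ hka _ hkc)
  · -- one
    intro a ha
    rw [fm_one ψ h4, mul_one, mul_one]
  · -- mul
    intro u v hu hv pu pv a ha
    have hu5 : u ∈ alternatingGroup (Fin 5) := closure_le_A5 hu
    have hv5 : v ∈ alternatingGroup (Fin 5) := closure_le_A5 hv
    have h1 : fmat ψ u * fmat ψ v = fmat ψ (u * v) := pv u hu5
    rw [← h1, ← mul_assoc, pu a ha, pv (a * u) (mul_mem ha hu5), mul_assoc]
  · -- inv
    intro u hu pu a ha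
    have hu5 : u ∈ alternatingGroup (Fin 5) := closure_le_A5 hu
    have h1 : fmat ψ (a * u⁻¹) * fmat ψ u = fmat ψ a := by
      rw [pu (a * u⁻¹) (mul_mem ha (inv_mem hu5))]
      simp
    rw [fm_inv ψ (mem_keys hu5), ← h1, mul_assoc, fm_orth' ψ h4 (mem_keys hu5), mul_one]

end KLevel

/-- If `char K ≠ 2`, `−1` is a sum of two squares in `K` and `5` is a square in `K`,
then the special orthogonal group of the standard quadratic form `x² + y² + z²` over `K`
(matrices of determinant `1` preserving the form) contains a subgroup isomorphic
to `A₅`, i.e. there is an injective homomorphism from `A₅` into `GL₃(K)` landing in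
that special orthogonal group. -/
theorem SO3_contains_A5
    (K : Type*) [Field K] (h2 : (2 : K) ≠ 0)
    (hsq : ∃ a b : K, a ^ 2 + b ^ 2 = -1) (h5 : IsSquare (5 : K)) :
    ∃ f : alternatingGroup (Fin 5) →* GL (Fin 3) K,
      Function.Injective f ∧
      ∀ g : alternatingGroup (Fin 5),
        Matrix.det ((f g : GL (Fin 3) K) : Matrix (Fin 3) (Fin 3) K) = 1 ∧
        ∀ v : Fin 3 → K,
          (∑ i, (((f g : GL (Fin 3) K) : Matrix (Fin 3) (Fin 3) K).mulVec v i) ^ 2)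
            = ∑ i, v i ^ 2 := by
  classical
  obtain ⟨r, hr⟩ := h5
  have h4 : (4 : K) ≠ 0 := by
    intro h
    rcases mul_eq_zero.mp (show (2 : K) * 2 = 0 by linear_combination h) with h' | h' <;>
      exact h2 h'
  set ψ : Zsqrtd 5 →+* K := zlift r hr.symm with hψ
  -- the homomorphism
  have hmul : ∀ a b : alternatingGroup (Fin 5),
      fmat ψ (a : Equiv.Perm (Fin 5)) * fmat ψ (b : Equiv.Perm (Fin 5))
        = fmat ψ ((a : Equiv.Perm (Fin 5)) * (b : Equiv.Perm (Fin 5))) := by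
    intro a b
    exact fm_mul ψ h4 _ b.2 _ a.2
  have hval_inv : ∀ g : alternatingGroup (Fin 5),
      fmat ψ (g : Equiv.Perm (Fin 5)) * fmat ψ ((g⁻¹ : alternatingGroup (Fin 5)) : Equiv.Perm (Fin 5)) = 1 := by
    intro g
    rw [hmul g g⁻¹]
    have : ((g : Equiv.Perm (Fin 5)) * ((g⁻¹ : alternatingGroup (Fin 5)) : Equiv.Perm (Fin 5))) = 1 := by
      push_cast
      simp
    rw [this, fm_one ψ h4]
  have hval_inv' : ∀ g : alternatingGroup (Fin 5),
      fmat ψ ((g⁻¹ : alternatingGroup (Fin 5)) : Equiv.Perm (Fin 5)) * fmat ψ (g : Equiv.Perm (Fin 5)) = 1 := by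
    intro g
    rw [hmul g⁻¹ g]
    have : (((g⁻¹ : alternatingGroup (Fin 5)) : Equiv.Perm (Fin 5)) * (g : Equiv.Perm (Fin 5))) = 1 := by
      push_cast
      simp
    rw [this, fm_one ψ h4]
  let toGL : alternatingGroup (Fin 5) → GL (Fin 3) K := fun g =>
    ⟨fmat ψ (g : Equiv.Perm (Fin 5)), fmat ψ ((g⁻¹ : alternatingGroup (Fin 5)) : Equiv.Perm (Fin 5)),
      hval_inv g, hval_inv' g⟩
  let f : alternatingGroup (Fin 5) →* GL (Fin 3) K :=
    MonoidHom.mk' toGL (by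
      intro a b
      refine Units.ext ?_
      show fmat ψ (((a * b : alternatingGroup (Fin 5))) : Equiv.Perm (Fin 5)) = _
      have : (((a * b : alternatingGroup (Fin 5))) : Equiv.Perm (Fin 5))
          = (a : Equiv.Perm (Fin 5)) * (b : Equiv.Perm (Fin 5)) := rfl
      rw [this, ← hmul a b]
      rfl)
  have hcoe : ∀ g : alternatingGroup (Fin 5),
      ((f g : GL (Fin 3) K) : Matrix (Fin 3) (Fin 3) K) = fmat ψ (g : Equiv.Perm (Fin 5)) := fun g => rfl
  -- injectivity
  have hinj : Function.Injective f := by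
    rw [← MonoidHom.ker_eq_bot_iff]
    rcases f.normal_ker.eq_bot_or_eq_top with h | h
    · exact h
    · exfalso
      set g0 : alternatingGroup (Fin 5) := ⟨px0, Equiv.Perm.mem_alternatingGroup.mpr g0_sign⟩
      have hg0 : f g0 = 1 := by
        have : g0 ∈ f.ker := by rw [h]; trivial
        exact this
      have hval : fmat ψ px0 = (1 : Matrix (Fin 3) (Fin 3) K) := by
        have := congrArg (fun u : GL (Fin 3) K => (u : Matrix (Fin 3) (Fin 3) K)) hg0
        simpa [hcoe g0] using this
      have hent := congrFun (congrFun hval 1) 1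
      rw [Matrix.one_apply_eq] at hent
      have hent' : (4 : K)⁻¹ * ψ (Fk (pkey px0) 1 1) = 1 := hent
      rw [Fk_g0] at hent'
      have hneg : ψ (-4 : Zsqrtd 5) = (-4 : K) := by
        rw [map_neg, map_ofNat]
      rw [hneg, show ((-4) : K) = -(4 : K) by norm_num, mul_neg, inv_mul_cancel₀ h4] at hent'
      exact h2 (by linear_combination - hent')
  refine ⟨f, hinj, ?_⟩
  -- determinant is 1 via simplicity
  have hdet : ∀ g : alternatingGroup (Fin 5),
      Matrix.det ((f g : GL (Fin 3) K) : Matrix (Fin 3) (Fin 3) K) = 1 := by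
    set d : alternatingGroup (Fin 5) →* Kˣ := (Matrix.GeneralLinearGroup.det).comp f with hd
    rcases d.normal_ker.eq_bot_or_eq_top with h | h
    · exfalso
      have hinjd : Function.Injective d := (MonoidHom.ker_eq_bot_iff d).mp h
      set gx : alternatingGroup (Fin 5) := ⟨px, Equiv.Perm.mem_alternatingGroup.mpr px_sign⟩
      set gy : alternatingGroup (Fin 5) := ⟨py, Equiv.Perm.mem_alternatingGroup.mpr py_sign⟩
      have : gx * gy = gy * gx := hinjd (by rw [_root_.map_mul, _root_.map_mul, mul_comm])
      have hcontra : px * py = py * px := congrArg Subtype.val this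
      exact absurd hcontra (by decide)
    · intro g
      have hg : g ∈ d.ker := by rw [h]; trivial
      have : d g = 1 := hg
      have := congrArg (fun u : Kˣ => (u : K)) this
      simpa [hd, Matrix.GeneralLinearGroup.det] using this
  intro g
  refine ⟨hdet g, ?_⟩
  -- quadratic form preservation
  intro v
  have horth : ((f g : GL (Fin 3) K) : Matrix (Fin 3) (Fin 3) K)ᵀ
      * ((f g : GL (Fin 3) K) : Matrix (Fin 3) (Fin 3) K) = 1 := by
    rw [hcoe g]
    exact fm_orth ψ h4 (mem_keys g.2)
  set M : Matrix (Fin 3) (Fin 3) K := ((f g : GL (Fin 3) K) : Matrix (Fin 3) (Fin 3) K) with hM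
  calc ∑ i, (M.mulVec v i) ^ 2
      = M.mulVec v ⬝ᵥ M.mulVec v := by simp [dotProduct, sq]
    _ = (M.mulVec v ᵥ* M) ⬝ᵥ v := Matrix.dotProduct_mulVec _ _ _
    _ = (v ᵥ* (Mᵀ * M)) ⬝ᵥ v := by rw [← Matrix.vecMul_transpose, Matrix.vecMul_vecMul]
    _ = v ⬝ᵥ v := by rw [horth, Matrix.vecMul_one]
    _ = ∑ i, v i ^ 2 := by simp [dotProduct, sq]
end

section
/- Let G be a group acting on a group A by automorphisms (compatible with a Galois action), H a subgroup of G(K) ⊆ G(K_s) with centralizer Z in G(K_s), and let X = { g ∈ G(K_s) : g⁻¹·σ(g) ∈ Z for all σ ∈ Gal(K_s/K) }. Then the map g ↦ (conjugation by g restricted to H) induces a bijection between the double coset space G(K)\X/Z and the set of embeddings H → G(K) that are conjugate to the inclusion by an element of G(K_s), modulo conjugacy by G(K). -/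
section aux

variable {G : Type*} [Group G]

/-- If `a c a⁻¹ = b c b⁻¹` then `b⁻¹ a` commutes with `c`. -/
lemma conj_comm_aux (a b c : G) (h : a * c * a⁻¹ = b * c * b⁻¹) :
    (b⁻¹ * a) * c = c * (b⁻¹ * a) := by
  have h1 : a * c = b * c * b⁻¹ * a := by
    calc a * c = (a * c * a⁻¹) * a := by group
      _ = b * c * b⁻¹ * a := by rw [h]
  calc b⁻¹ * a * c = b⁻¹ * (a * c) := by group
    _ = b⁻¹ * (b * c * b⁻¹ * a) := by rw [h1]
    _ = c * (b⁻¹ * a) := by group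

end aux

/-- Galois descent for conjugacy of embeddings (Proposition 2.2 of Beauville).
Abstract setting: a group `Γ` (the Galois group `Gal(K_s/K)`) acts by automorphisms
on a group `G` (the points `G(K_s)`); `GK` is the subgroup of `Γ`-fixed points
(the rational points `G(K)`); `H ≤ GK` is a subgroup, `Z` its centralizer in `G`,
and `X = {g ∈ G | ∀ σ, g⁻¹ · σ g ∈ Z}`.  `E` is the set of homomorphisms
`H → G` landing in `GK` that are conjugate to the inclusion by an element of `G`.
Then `g ↦ (h ↦ g h g⁻¹)` induces a bijection from the double coset space
`GK \ X / Z` to `E` modulo conjugation by elements of `GK`. -/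
theorem double_coset_bijection_embeddings
    (Γ G : Type*) [Group Γ] [Group G] [MulDistribMulAction Γ G]
    (GK : Subgroup G) (hGK : ∀ g : G, g ∈ GK ↔ ∀ σ : Γ, σ • g = g)
    (H : Subgroup G) (hH : H ≤ GK)
    (Z : Subgroup G) (hZ : Z = Subgroup.centralizer (H : Set G))
    (X : Set G) (hX : X = {g : G | ∀ σ : Γ, g⁻¹ * σ • g ∈ Z})
    (E : Set (H →* G))
    (hE : E = {j : H →* G | (∀ h : H, j h ∈ GK) ∧ ∃ g : G, ∀ h : H, j h = g * h * g⁻¹})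
    (rX : X → X → Prop)
    (hrX : ∀ g g' : X, rX g g' ↔ ∃ k ∈ GK, ∃ z ∈ Z, (g' : G) = k * g * z)
    (rE : E → E → Prop)
    (hrE : ∀ j j' : E, rE j j' ↔ ∃ k ∈ GK, ∀ h : H, (j' : H →* G) h = k * ((j : H →* G) h) * k⁻¹) :
    ∃ e : Quot rX ≃ Quot rE,
      ∀ (g : X) (j : E), (∀ h : H, (j : H →* G) h = (g : G) * h * (g : G)⁻¹) →
        e (Quot.mk rX g) = Quot.mk rE j := by
  classical
  -- membership in Z
  have hZmem : ∀ z : G, z ∈ Z ↔ ∀ h : H, (h : G) * z = z * h := by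
    intro z
    rw [hZ, Subgroup.mem_centralizer_iff]
    constructor
    · intro hz h; exact hz h h.2
    · intro hz x hx; exact hz ⟨x, hx⟩
  -- the conjugation homomorphism
  let J : G → (H →* G) := fun g =>
    { toFun := fun h => g * h * g⁻¹
      map_one' := by simp
      map_mul' := by intro a b; simp only [Subgroup.coe_mul]; group }
  have hJ : ∀ (g : G) (h : H), J g h = g * h * g⁻¹ := fun g h => rfl
  -- coerced elements of H are Galois-fixed
  have hHfix : ∀ (σ : Γ) (h : H), σ • (h : G) = h := fun σ h => (hGK _).mp (hH h.2) σ
  -- forward membership : if g ∈ X then J g ∈ E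
  have JmemE : ∀ g : G, g ∈ X → J g ∈ E := by
    intro g hg
    rw [hE]
    refine ⟨?_, g, fun h => rfl⟩
    intro h
    rw [hJ, hGK]
    intro σ
    rw [hX] at hg
    have hz : g⁻¹ * σ • g ∈ Z := hg σ
    have hcomm : (h : G) * (g⁻¹ * σ • g) = (g⁻¹ * σ • g) * h := (hZmem _).mp hz h
    have hσg : σ • g = g * (g⁻¹ * σ • g) := by group
    calc σ • (g * h * g⁻¹) = (σ • g) * (h : G) * (σ • g)⁻¹ := by
          rw [smul_mul', smul_mul', smul_inv', hHfix σ h]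
      _ = g * ((g⁻¹ * σ • g) * h) * (g⁻¹ * σ • g)⁻¹ * g⁻¹ := by rw [hσg]; group
      _ = g * ((h : G) * (g⁻¹ * σ • g)) * (g⁻¹ * σ • g)⁻¹ * g⁻¹ := by rw [hcomm]
      _ = g * h * g⁻¹ := by group
  -- backward membership : a conjugation witness for a GK-valued hom lies in X
  have witness_memX : ∀ g : G, (∀ h : H, (g * h * g⁻¹ : G) ∈ GK) → g ∈ X := by
    intro g hg
    rw [hX]
    intro σ
    rw [hZmem]
    intro h
    have h1 : (σ • g) * (h : G) * (σ • g)⁻¹ = g * h * g⁻¹ := by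
      have := (hGK _).mp (hg h) σ
      rw [smul_mul', smul_mul', smul_inv', hHfix σ h] at this
      exact this
    exact (conj_comm_aux (σ • g) g (h : G) h1).symm
  -- forward descent
  have fdesc : ∀ (g g' k z : G), z ∈ Z → g' = k * g * z →
      ∀ h : H, g' * h * g'⁻¹ = k * (g * h * g⁻¹) * k⁻¹ := by
    intro g g' k z hz hgg h
    have hc : (h : G) * z = z * h := (hZmem z).mp hz h
    subst hgg
    calc k * g * z * h * (k * g * z)⁻¹ = k * (g * ((z * h) * z⁻¹) * g⁻¹) * k⁻¹ := by group
      _ = k * (g * (((h : G) * z) * z⁻¹) * g⁻¹) * k⁻¹ := by rw [hc]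
      _ = k * (g * h * g⁻¹) * k⁻¹ := by group
  -- backward descent
  have bdesc : ∀ g g' k : G, (∀ h : H, g' * h * g'⁻¹ = k * (g * h * g⁻¹) * k⁻¹) →
      g' = k * g * ((k * g)⁻¹ * g') ∧ ((k * g)⁻¹ * g') ∈ Z := by
    intro g g' k hk
    constructor
    · group
    · rw [hZmem]
      intro h
      have h1 : g' * h * g'⁻¹ = (k * g) * h * (k * g)⁻¹ := by rw [hk h]; group
      exact (conj_comm_aux g' (k * g) (h : G) h1).symm
  -- membership facts for E
  have hEmem : ∀ j : E, (∀ h : H, (j : H →* G) h ∈ GK) ∧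
      ∃ g : G, ∀ h : H, (j : H →* G) h = g * h * g⁻¹ := by
    intro j
    obtain ⟨jf, hjf⟩ := j
    rw [hE] at hjf
    exact hjf
  -- choice of witness
  let W : E → G := fun j => Classical.choose (hEmem j).2
  have hW : ∀ (j : E) (h : H), (j : H →* G) h = W j * h * (W j)⁻¹ :=
    fun j => Classical.choose_spec (hEmem j).2
  have WmemX : ∀ j : E, W j ∈ X := by
    intro j
    refine witness_memX (W j) fun h => ?_
    rw [← hW j h]
    exact (hEmem j).1 h
  -- forward map
  let F : X → Quot rE := fun g => Quot.mk rE ⟨J g, JmemE g g.2⟩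
  have Fsound : ∀ a b : X, rX a b → F a = F b := by
    intro a b hab
    rw [hrX] at hab
    obtain ⟨k, hk, z, hz, hb⟩ := hab
    apply Quot.sound
    rw [hrE]
    exact ⟨k, hk, fun h => fdesc a b k z hz hb h⟩
  let f : Quot rX → Quot rE := Quot.lift F Fsound
  -- backward map
  let Finv : E → Quot rX := fun j => Quot.mk rX ⟨W j, WmemX j⟩
  have Finvsound : ∀ a b : E, rE a b → Finv a = Finv b := by
    intro a b hab
    rw [hrE] at hab
    obtain ⟨k, hk, hkk⟩ := hab
    have hconj : ∀ h : H, W b * h * (W b)⁻¹ = k * (W a * h * (W a)⁻¹) * k⁻¹ := by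
      intro h
      rw [← hW b h, ← hW a h]
      exact hkk h
    obtain ⟨heq, hz⟩ := bdesc (W a) (W b) k hconj
    apply Quot.sound
    rw [hrX]
    exact ⟨k, hk, (k * W a)⁻¹ * W b, hz, heq⟩
  let finv : Quot rE → Quot rX := Quot.lift Finv Finvsound
  -- left inverse
  have hleft : ∀ q : Quot rX, finv (f q) = q := by
    intro q
    induction q using Quot.ind with
    | _ g =>
      simp only [f, finv, F, Finv]
      apply Quot.sound
      rw [hrX]
      set jg : E := ⟨J g, JmemE g g.2⟩ with hjg
      have hconj : ∀ h : H, (g : G) * h * (g : G)⁻¹ = 1 * (W jg * h * (W jg)⁻¹) * 1⁻¹ := by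
        intro h
        rw [one_mul, inv_one, mul_one, ← hW jg h]
        exact (hJ g h).symm
      obtain ⟨heq, hz⟩ := bdesc (W jg) (g : G) 1 hconj
      exact ⟨1, GK.one_mem, (1 * W jg)⁻¹ * g, hz, heq⟩
  -- right inverse
  have hright : ∀ q : Quot rE, f (finv q) = q := by
    intro q
    induction q using Quot.ind with
    | _ j =>
      simp only [f, finv, F, Finv]
      congr 1
      apply Subtype.ext
      apply MonoidHom.ext
      intro h
      exact (hW j h).symm
  refine ⟨⟨f, finv, hleft, hright⟩, ?_⟩
  intro g j hgj
  show f (Quot.mk rX g) = Quot.mk rE j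
  apply Quot.sound
  rw [hrE]
  refine ⟨1, GK.one_mem, fun h => ?_⟩
  rw [one_mul, inv_one, mul_one, hgj h]
  exact (hJ g h).symm
end

section
/- Let K be a field of characteristic ≠ 2. For α ∈ K*, the homography h_α: z ↦ α/z, i.e., the class of [[0, α],[1, 0]] in PGL₂(K), is an involution, and two such involutions h_α, h_β are conjugate in PGL₂(K) if and only if α/β is a square in K*. -/
open Matrix

section aux
variable {K : Type*} [Field K]

/-- A unit of `GL₂` whose matrix is scalar lies in the center. -/
lemma scalar_mem_center_GL2 (Z : GL (Fin 2) K) (c : K)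
    (hZ : (Z : Matrix (Fin 2) (Fin 2) K) = c • 1) :
    Z ∈ Subgroup.center (GL (Fin 2) K) := by
  rw [Subgroup.mem_center_iff]
  intro g
  ext
  simp only [Units.val_mul, hZ]
  rw [mul_smul_comm, smul_mul_assoc, mul_one, one_mul]

/-- The transvection `!![1,1;0,1]` as a unit. -/
def T1 : GL (Fin 2) K :=
  ⟨!![1,1;0,1], !![1,-1;0,1],
    by rw [Matrix.mul_fin_two, Matrix.one_fin_two]; norm_num,
    by rw [Matrix.mul_fin_two, Matrix.one_fin_two]; norm_num⟩

/-- The transvection `!![1,0;1,1]` as a unit. -/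
def T2 : GL (Fin 2) K :=
  ⟨!![1,0;1,1], !![1,0;-1,1],
    by rw [Matrix.mul_fin_two, Matrix.one_fin_two]; norm_num,
    by rw [Matrix.mul_fin_two, Matrix.one_fin_two]; norm_num⟩

/-- A central element of `GL₂` has scalar matrix. -/
lemma center_GL2_scalar (Z : GL (Fin 2) K) (hZ : Z ∈ Subgroup.center (GL (Fin 2) K)) :
    (Z : Matrix (Fin 2) (Fin 2) K) = ((Z : Matrix (Fin 2) (Fin 2) K) 0 0) • 1 := by
  rw [Subgroup.mem_center_iff] at hZ
  have h1 := congrArg Units.val (hZ T1)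
  have h2 := congrArg Units.val (hZ T2)
  simp only [Units.val_mul, T1, T2] at h1 h2
  set M := (Z : Matrix (Fin 2) (Fin 2) K) with hM
  have e10 : M 1 0 = 0 := by
    have := congrFun (congrFun h1 0) 0
    simp [Matrix.mul_apply, Fin.sum_univ_two] at this
    exact this
  have e01 : M 0 1 = 0 := by
    have := congrFun (congrFun h2 1) 1
    simp [Matrix.mul_apply, Fin.sum_univ_two] at this
    exact this
  have e11 : M 1 1 = M 0 0 := by
    have := congrFun (congrFun h1 0) 1
    simp [Matrix.mul_apply, Fin.sum_univ_two] at this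
    linear_combination this
  ext i j
  fin_cases i <;> fin_cases j <;>
    simp [Matrix.one_apply, e10, e01, e11]

end aux

/-- For `char K ≠ 2` and `α, β ∈ K*`, the homography `z ↦ α/z` (class of
`[[0,α],[1,0]]` in `PGL₂(K)`) is an involution, and the involutions associated to
`α` and `β` are conjugate in `PGL₂(K)` iff `α/β` is a square in `K`. -/
theorem involution_conj_iff_square
    (K : Type*) [Field K] (h2 : (2 : K) ≠ 0)
    (a b : K) (ha : a ≠ 0) (hb : b ≠ 0)
    (A B : GL (Fin 2) K)
    (hA : (A : Matrix (Fin 2) (Fin 2) K) = !![0, a; 1, 0])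
    (hB : (B : Matrix (Fin 2) (Fin 2) K) = !![0, b; 1, 0]) :
    orderOf (QuotientGroup.mk A : PGL2 K) = 2 ∧
    (IsConj (QuotientGroup.mk A : PGL2 K) (QuotientGroup.mk B) ↔ IsSquare (a / b)) := by
  constructor
  · -- order two
    have hsq : (QuotientGroup.mk A : PGL2 K) ^ 2 = 1 := by
      have hc : ((A : GL (Fin 2) K) ^ 2 : GL (Fin 2) K) ∈ Subgroup.center (GL (Fin 2) K) := by
        apply scalar_mem_center_GL2 _ a
        have hv : ((A ^ 2 : GL (Fin 2) K) : Matrix (Fin 2) (Fin 2) K) =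
            (A : Matrix (Fin 2) (Fin 2) K) * A := by
          simp [pow_two]
        rw [hv, hA, Matrix.mul_fin_two]
        ext i j
        fin_cases i <;> fin_cases j <;> simp [Matrix.one_apply]
      rw [← QuotientGroup.mk_pow, QuotientGroup.eq_one_iff]
      exact hc
    have hne : (QuotientGroup.mk A : PGL2 K) ≠ 1 := by
      intro h
      rw [QuotientGroup.eq_one_iff] at h
      have hs := center_GL2_scalar A h
      rw [hA] at hs
      have := congrFun (congrFun hs 1) 0
      simp at this
    exact orderOf_eq_prime hsq hne
  · constructor
    · -- conjugate → square
      intro hc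
      rw [isConj_iff] at hc
      obtain ⟨g, hg⟩ := hc
      induction g using QuotientGroup.induction_on with
      | H P =>
      have hmk : (QuotientGroup.mk (P * A) : PGL2 K) = QuotientGroup.mk (B * P) := by
        have : (QuotientGroup.mk P : PGL2 K) * QuotientGroup.mk A =
            QuotientGroup.mk B * QuotientGroup.mk P := by
          rw [← hg]; group
        simpa [QuotientGroup.mk_mul] using this
      rw [QuotientGroup.eq] at hmk
      set Z := (P * A)⁻¹ * (B * P) with hZdef
      have hZs := center_GL2_scalar Z hmk
      set l := ((Z : Matrix (Fin 2) (Fin 2) K) 0 0) with hl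
      have hBP : (B * P : GL (Fin 2) K) = (P * A) * Z := by
        rw [hZdef, mul_inv_cancel_left]
      have E : (B : Matrix (Fin 2) (Fin 2) K) * P = l • ((P : Matrix (Fin 2) (Fin 2) K) * A) := by
        have := congrArg Units.val hBP
        simp only [Units.val_mul] at this
        rw [this, hZs, mul_smul_comm, mul_one]
      set p := ((P : Matrix (Fin 2) (Fin 2) K)) 0 0 with hp
      set q := ((P : Matrix (Fin 2) (Fin 2) K)) 0 1 with hq
      set r := ((P : Matrix (Fin 2) (Fin 2) K)) 1 0 with hr
      set s := ((P : Matrix (Fin 2) (Fin 2) K)) 1 1 with hs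
      have h00 := congrFun (congrFun E 0) 0
      have h01 := congrFun (congrFun E 0) 1
      have h10 := congrFun (congrFun E 1) 0
      have h11 := congrFun (congrFun E 1) 1
      simp only [Matrix.mul_apply, Fin.sum_univ_two, Matrix.smul_apply, hA, hB,
        smul_eq_mul] at h00 h01 h10 h11
      simp [← hp, ← hq, ← hr, ← hs] at h00 h01 h10 h11
      -- h00 : b * r = l * q, h01 : b * s = l * (p * a),
      -- h10 : p = l * s, h11 : q = l * (r * a)  (up to simp normal form)
      have hdet : p * s - q * r ≠ 0 := by
        have h1 : (P : Matrix (Fin 2) (Fin 2) K).det * ((P⁻¹ : GL (Fin 2) K) : Matrix (Fin 2) (Fin 2) K).det = 1 := by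
          rw [← Matrix.det_mul, ← Units.val_mul, mul_inv_cancel, Units.val_one, Matrix.det_one]
        have h2 := left_ne_zero_of_mul_eq_one h1
        rwa [Matrix.det_fin_two, ← hp, ← hq, ← hr, ← hs] at h2
      have hl0 : l ≠ 0 := by
        intro h0
        rw [h0] at h10 h11
        simp at h10 h11
        apply hdet
        rw [h10, h11]; ring
      have hba : b = l * l * a := by
        rcases eq_or_ne s 0 with hs0 | hs0
        · have hr0 : r ≠ 0 := by
            intro hr0
            apply hdet
            rw [hs0, hr0]; ring
          have key : b * r = (l * l * a) * r := by rw [h00, h11]; ring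
          exact mul_right_cancel₀ hr0 key
        · have key : b * s = (l * l * a) * s := by rw [h01, h10]; ring
          exact mul_right_cancel₀ hs0 key
      refine ⟨l⁻¹, ?_⟩
      rw [hba]
      field_simp
    · -- square → conjugate
      rintro ⟨c, hsq⟩
      have hc0 : c ≠ 0 := by
        intro h0
        rw [h0, mul_zero] at hsq
        exact (div_ne_zero ha hb) hsq
      have hab : a = c * c * b := by
        field_simp at hsq
        linear_combination hsq
      set P : GL (Fin 2) K :=
        ⟨!![1,0;0,c], !![1,0;0,c⁻¹],
          by rw [Matrix.mul_fin_two, Matrix.one_fin_two]; field_simp; simp,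
          by rw [Matrix.mul_fin_two, Matrix.one_fin_two]; field_simp; simp⟩ with hPdef
      set Z : GL (Fin 2) K :=
        ⟨c • 1, c⁻¹ • 1,
          by rw [smul_mul_smul_comm, mul_one, mul_inv_cancel₀ hc0, one_smul],
          by rw [smul_mul_smul_comm, mul_one, inv_mul_cancel₀ hc0, one_smul]⟩ with hZdef
      have hPA : P * A = (B * P) * Z := by
        refine Units.ext ?_
        simp only [Units.val_mul, hA, hB, hPdef, hZdef]
        rw [mul_smul_comm, mul_one, Matrix.mul_fin_two, Matrix.mul_fin_two]
        ext i j
        fin_cases i <;> fin_cases j <;> simp [hab] <;> ring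
      have hZ1 : (QuotientGroup.mk Z : PGL2 K) = 1 :=
        (QuotientGroup.eq_one_iff _).mpr (scalar_mem_center_GL2 Z c rfl)
      have hmk : (QuotientGroup.mk (P * A) : PGL2 K) = QuotientGroup.mk (B * P) := by
        rw [hPA, QuotientGroup.mk_mul, hZ1, mul_one]
      rw [isConj_iff]
      refine ⟨QuotientGroup.mk P, ?_⟩
      rw [← QuotientGroup.mk_mul, hmk, QuotientGroup.mk_mul, mul_inv_cancel_right]
end

section
/- Let K be a separably closed field of characteristic prime to r. The normalizer in PGL₂(K) of the dihedral subgroup D_r generated by z ↦ 1/z and z ↦ ζz (ζ a primitive r-th root of unity, r > 2) is the dihedral group D_{2r} generated by z ↦ 1/z and z ↦ ηz, where η is a primitive 2r-th root of unity. -/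
namespace NormalizerDihedralAux

section Grp

variable {G : Type*} [Group G]

lemma inv_eq_self {s : G} (hs : s * s = 1) : s⁻¹ = s := inv_eq_of_mul_eq_one_right hs

lemma semi {s v : G} (hs : s * s = 1) (hvs : s * v * s = v⁻¹) (k : ℤ) :
    s * v ^ k = v ^ (-k) * s := by
  have h1 : s * v = v⁻¹ * s := by
    have h2 : s * v * (s * s) = v⁻¹ * s := by rw [← mul_assoc, hvs]
    simpa [hs] using h2
  have hsc : SemiconjBy s v v⁻¹ := h1
  have h3 := hsc.zpow_right k
  have h4 : (v⁻¹) ^ k = v ^ (-k) := by rw [inv_zpow, zpow_neg]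
  simpa [SemiconjBy, h4] using h3

/-- The abstract dihedral subgroup generated by `v` and an involution `s` inverting `v`. -/
def dihedralSub (v s : G) (hs : s * s = 1) (hvs : s * v * s = v⁻¹) : Subgroup G where
  carrier := {g | ∃ k : ℤ, g = v ^ k ∨ g = v ^ k * s}
  one_mem' := ⟨0, Or.inl (zpow_zero v).symm⟩
  mul_mem' := by
    rintro x y ⟨a, rfl | rfl⟩ ⟨b, rfl | rfl⟩
    · exact ⟨a + b, Or.inl (zpow_add v a b).symm⟩
    · exact ⟨a + b, Or.inr (by rw [← mul_assoc, ← zpow_add])⟩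
    · refine ⟨a - b, Or.inr ?_⟩
      calc v ^ a * s * v ^ b = v ^ a * (s * v ^ b) := by rw [mul_assoc]
        _ = v ^ a * (v ^ (-b) * s) := by rw [semi hs hvs b]
        _ = v ^ (a - b) * s := by rw [← mul_assoc, ← zpow_add, sub_eq_add_neg]
    · refine ⟨a - b, Or.inl ?_⟩
      calc v ^ a * s * (v ^ b * s) = v ^ a * (s * v ^ b) * s := by
            rw [mul_assoc, mul_assoc, mul_assoc]
        _ = v ^ a * (v ^ (-b) * s) * s := by rw [semi hs hvs b]
        _ = v ^ (a - b) * (s * s) := by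
            rw [← mul_assoc, ← zpow_add, sub_eq_add_neg, mul_assoc]
        _ = v ^ (a - b) := by rw [hs, mul_one]
  inv_mem' := by
    rintro x ⟨a, rfl | rfl⟩
    · exact ⟨-a, Or.inl (by rw [zpow_neg])⟩
    · refine ⟨a, Or.inr ?_⟩
      calc (v ^ a * s)⁻¹ = s⁻¹ * (v ^ a)⁻¹ := mul_inv_rev _ _
        _ = s * v ^ (-a) := by rw [inv_eq_self hs, zpow_neg]
        _ = v ^ a * s := by rw [semi hs hvs (-a), neg_neg]

lemma mem_dihedralSub {v s : G} {hs : s * s = 1} {hvs : s * v * s = v⁻¹} {g : G} :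
    g ∈ dihedralSub v s hs hvs ↔ ∃ k : ℤ, g = v ^ k ∨ g = v ^ k * s := Iff.rfl

lemma closure_eq_dihedralSub (v s : G) (hs : s * s = 1) (hvs : s * v * s = v⁻¹) :
    Subgroup.closure {s, v} = dihedralSub v s hs hvs := by
  apply le_antisymm
  · rw [Subgroup.closure_le]
    rintro x (rfl | rfl)
    · exact ⟨0, Or.inr (by rw [zpow_zero, one_mul])⟩
    · exact ⟨1, Or.inl (zpow_one _).symm⟩
  · rintro x ⟨k, rfl | rfl⟩
    · exact zpow_mem (Subgroup.subset_closure (by simp)) k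
    · exact mul_mem (zpow_mem (Subgroup.subset_closure (by simp)) k)
        (Subgroup.subset_closure (by simp))

lemma zpow_reduce {v : G} {n : ℕ} (hn : n ≠ 0) (hv : v ^ n = 1) (k : ℤ) :
    v ^ k = v ^ ((k % (n : ℤ)).toNat) := by
  have h1 : v ^ ((n : ℤ)) = 1 := by rw [zpow_natCast, hv]
  have h2 : (0 : ℤ) ≤ k % (n : ℤ) :=
    Int.emod_nonneg k (by exact_mod_cast hn)
  conv_lhs => rw [← Int.emod_add_mul_ediv k (n : ℤ)]
  rw [zpow_add, zpow_mul, h1, one_zpow, mul_one, ← zpow_natCast,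
    Int.toNat_of_nonneg h2]

end Grp

section GLtwo

open Matrix Subgroup

variable {K : Type*} [Field K]

local notation "M2" => Matrix (Fin 2) (Fin 2) K

lemma mem_center_GL2_iff {z : GL (Fin 2) K} :
    z ∈ Subgroup.center (GL (Fin 2) K) ↔ ∃ c : K, (z : M2) = c • 1 := by
  constructor
  · intro hz
    have hcomm : ∀ t : TransvectionStruct (Fin 2) K, Commute t.toMatrix (z : M2) := by
      intro t
      have h := Subgroup.mem_center_iff.mp hz
        ⟨t.toMatrix, t.inv.toMatrix, t.mul_inv, t.inv_mul⟩
      exact congrArg Units.val h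
    obtain ⟨c, hc⟩ := Matrix.mem_range_scalar_of_commute_transvectionStruct hcomm
    exact ⟨c, by rw [← hc, Matrix.scalar_apply, Matrix.smul_one_eq_diagonal]⟩
  · rintro ⟨c, hc⟩
    refine Subgroup.mem_center_iff.mpr fun g => Units.ext ?_
    show (g : M2) * (z : M2) = (z : M2) * (g : M2)
    rw [hc, smul_mul_assoc, mul_smul_comm, one_mul, mul_one]

lemma mk_eq_mk {A B : GL (Fin 2) K} :
    (QuotientGroup.mk A : PGL2 K) = QuotientGroup.mk B ↔
      ∃ c : K, (B : M2) = c • (A : M2) := by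
  rw [QuotientGroup.eq, mem_center_GL2_iff]
  constructor
  · rintro ⟨c, hc⟩
    refine ⟨c, ?_⟩
    calc (B : M2) = ((A * (A⁻¹ * B) : GL (Fin 2) K) : M2) := by rw [mul_inv_cancel_left]
      _ = (A : M2) * ((A⁻¹ * B : GL (Fin 2) K) : M2) := rfl
      _ = (A : M2) * (c • 1) := by rw [hc]
      _ = c • (A : M2) := by rw [mul_smul_comm, mul_one]
  · rintro ⟨c, hc⟩
    refine ⟨c, ?_⟩
    calc ((A⁻¹ * B : GL (Fin 2) K) : M2) = ((A⁻¹ : GL (Fin 2) K) : M2) * (B : M2) := rfl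
      _ = ((A⁻¹ : GL (Fin 2) K) : M2) * (c • (A : M2)) := by rw [hc]
      _ = c • (((A⁻¹ : GL (Fin 2) K) : M2) * (A : M2)) := by rw [mul_smul_comm]
      _ = c • (1 : M2) := by rw [Units.inv_mul]

lemma diag_entries {x y c : K} (h : !![x, 0; 0, y] = c • (1 : M2)) : x = c ∧ y = c := by
  have h0 := congrFun (congrFun h 0) 0
  have h1 := congrFun (congrFun h 1) 1
  simp [Matrix.one_apply] at h0 h1
  exact ⟨h0, h1⟩

end GLtwo

end NormalizerDihedralAux
open NormalizerDihedralAux Matrix in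
set_option maxHeartbeats 2000000 in
/-- Over a separably closed field `K` of characteristic prime to `r > 2`, the normalizer
in `PGL₂(K)` of the dihedral subgroup generated by `z ↦ 1/z` and `z ↦ ζz` (with `ζ` a
primitive `r`-th root of unity) is the dihedral group of order `4r` generated by
`z ↦ 1/z` and `z ↦ ηz`, where `η` is a primitive `2r`-th root of unity with `η² = ζ`. -/
theorem normalizer_of_dihedral
    (K : Type*) [Field K] [IsSepClosed K] (r : ℕ) (hr : 2 < r) (hchar : (r : K) ≠ 0)
    (ζ η : K) (hζ : IsPrimitiveRoot ζ r) (hη : IsPrimitiveRoot η (2 * r)) (hηζ : η ^ 2 = ζ)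
    (S Tζ Tη : GL (Fin 2) K)
    (hS : (S : Matrix (Fin 2) (Fin 2) K) = !![0, 1; 1, 0])
    (hTζ : (Tζ : Matrix (Fin 2) (Fin 2) K) = Matrix.diagonal ![ζ, 1])
    (hTη : (Tη : Matrix (Fin 2) (Fin 2) K) = Matrix.diagonal ![η, 1]) :
    Subgroup.normalizer
        (Subgroup.closure {(QuotientGroup.mk S : PGL2 K), QuotientGroup.mk Tζ})
      = Subgroup.closure {(QuotientGroup.mk S : PGL2 K), QuotientGroup.mk Tη} ∧
    Nonempty
      ((Subgroup.closure {(QuotientGroup.mk S : PGL2 K), QuotientGroup.mk Tη})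
        ≃* DihedralGroup (2 * r)) := by
  classical
  have hr0 : r ≠ 0 := by omega
  have h2r0 : 2 * r ≠ 0 := by omega
  have hη0 : η ≠ 0 := hη.ne_zero h2r0
  have hζ0 : ζ ≠ 0 := hζ.ne_zero hr0
  have hζ1 : ζ ≠ 1 := by
    have h := hζ.pow_ne_one_of_pos_of_lt (l := 1) (by norm_num) (by omega)
    simpa using h
  have hζsq : ζ ^ 2 ≠ 1 := hζ.pow_ne_one_of_pos_of_lt (by norm_num) hr
  have hηr : η ^ r = -1 := by
    have h1 : η ^ r * η ^ r = 1 := by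
      rw [← pow_add]
      have : r + r = 2 * r := by ring
      rw [this, hη.pow_eq_one]
    rcases mul_self_eq_one_iff.mp h1 with h | h
    · exact absurd h (hη.pow_ne_one_of_pos_of_lt (by omega) (by omega))
    · exact h
  -- matrix forms
  have hS' : (S : Matrix (Fin 2) (Fin 2) K) = !![0, 1; 1, 0] := hS
  have hTζ' : (Tζ : Matrix (Fin 2) (Fin 2) K) = !![ζ, 0; 0, 1] := by
    rw [hTζ]; ext i j; fin_cases i <;> fin_cases j <;>
      simp [Matrix.diagonal_apply]
  have hTη' : (Tη : Matrix (Fin 2) (Fin 2) K) = !![η, 0; 0, 1] := by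
    rw [hTη]; ext i j; fin_cases i <;> fin_cases j <;>
      simp [Matrix.diagonal_apply]
  have hTηpow : ∀ n : ℕ,
      ((Tη ^ n : GL (Fin 2) K) : Matrix (Fin 2) (Fin 2) K) = !![η ^ n, 0; 0, 1] := by
    intro n
    induction n with
    | zero => simp [Matrix.one_fin_two]
    | succ n ih =>
      rw [pow_succ, Units.val_mul, ih, hTη', Matrix.mul_fin_two]
      norm_num [pow_succ]
  have hTζpow : ∀ n : ℕ,
      ((Tζ ^ n : GL (Fin 2) K) : Matrix (Fin 2) (Fin 2) K) = !![ζ ^ n, 0; 0, 1] := by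
    intro n
    induction n with
    | zero => simp [Matrix.one_fin_two]
    | succ n ih =>
      rw [pow_succ, Units.val_mul, ih, hTζ', Matrix.mul_fin_two]
      norm_num [pow_succ]
  -- relations in GL
  have hSS : S * S = 1 := by
    apply Units.ext
    rw [Units.val_mul, hS', Matrix.mul_fin_two]
    norm_num [← Matrix.one_fin_two]
  have hTT : Tη * Tη = Tζ := by
    apply Units.ext
    rw [Units.val_mul, hTη', hTζ', Matrix.mul_fin_two]
    have : η * η = ζ := by rw [← hηζ]; ring
    norm_num [this]
  have hTζr : Tζ ^ r = 1 := by
    apply Units.ext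
    rw [hTζpow, hζ.pow_eq_one]
    norm_num [← Matrix.one_fin_two]
  have hTη2r : Tη ^ (2 * r) = 1 := by
    apply Units.ext
    rw [hTηpow, hη.pow_eq_one]
    norm_num [← Matrix.one_fin_two]
  have mkpow : ∀ (A : GL (Fin 2) K) (n : ℕ),
      (QuotientGroup.mk (A ^ n) : PGL2 K) = (QuotientGroup.mk A : PGL2 K) ^ n := by
    intro A n
    induction n with
    | zero => simp
    | succ n ih => rw [pow_succ, pow_succ, ← ih, ← QuotientGroup.mk_mul]
  set s : PGL2 K := QuotientGroup.mk S with hs_def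
  set u : PGL2 K := QuotientGroup.mk Tη with hu_def
  set t : PGL2 K := QuotientGroup.mk Tζ with ht_def
  have hs2 : s * s = 1 := by
    rw [hs_def, ← QuotientGroup.mk_mul, hSS, QuotientGroup.mk_one]
  have htu : t = u * u := by rw [ht_def, hu_def, ← QuotientGroup.mk_mul, hTT]
  have hu2r : u ^ (2 * r) = 1 := by
    rw [hu_def, ← mkpow, hTη2r, QuotientGroup.mk_one]
  have htr : t ^ r = 1 := by
    rw [ht_def, ← mkpow, hTζr, QuotientGroup.mk_one]
  have hsus : s * u * s = u⁻¹ := by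
    have hZc : (Tη * (S * Tη * S)) ∈ Subgroup.center (GL (Fin 2) K) := by
      rw [mem_center_GL2_iff]
      refine ⟨η, ?_⟩
      show (Tη : Matrix (Fin 2) (Fin 2) K) *
        ((S : Matrix (Fin 2) (Fin 2) K) * (Tη : Matrix (Fin 2) (Fin 2) K) *
          (S : Matrix (Fin 2) (Fin 2) K)) = η • 1
      rw [hS', hTη', Matrix.mul_fin_two, Matrix.mul_fin_two, Matrix.mul_fin_two,
        Matrix.one_fin_two]
      norm_num [Matrix.smul_of, Matrix.smul_cons]
    have h1 : u * (s * u * s) = 1 := by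
      rw [hu_def, hs_def, ← QuotientGroup.mk_mul, ← QuotientGroup.mk_mul,
        ← QuotientGroup.mk_mul]
      exact (QuotientGroup.eq_one_iff _).mpr hZc
    exact (inv_eq_of_mul_eq_one_right h1).symm
  have hsts : s * t * s = t⁻¹ := by
    rw [htu, _root_.mul_inv_rev, ← hsus]
    have hh : s * u * s * (s * u * s) = s * u * (s * s) * (u * s) := by group
    rw [hh, hs2, mul_one]
    group
  set H' : Subgroup (PGL2 K) := dihedralSub t s hs2 hsts with hH'def
  set N' : Subgroup (PGL2 K) := dihedralSub u s hs2 hsus with hN'def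
  have hclosH : Subgroup.closure {s, t} = H' := closure_eq_dihedralSub t s hs2 hsts
  have hclosN : Subgroup.closure {s, u} = N' := closure_eq_dihedralSub u s hs2 hsus
  -- order facts
  have hzent : ∀ m : ℕ, t ^ m = 1 → ζ ^ m = 1 := by
    intro m hm
    rw [ht_def, ← mkpow] at hm
    have h1 := (QuotientGroup.eq_one_iff _).mp hm
    rw [mem_center_GL2_iff] at h1
    obtain ⟨c, hc⟩ := h1
    rw [hTζpow] at hc
    obtain ⟨h2, h3⟩ := diag_entries hc
    rw [h2, ← h3]
  have huent : ∀ m : ℕ, u ^ m = 1 → η ^ m = 1 := by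
    intro m hm
    rw [hu_def, ← mkpow] at hm
    have h1 := (QuotientGroup.eq_one_iff _).mp hm
    rw [mem_center_GL2_iff] at h1
    obtain ⟨c, hc⟩ := h1
    rw [hTηpow] at hc
    obtain ⟨h2, h3⟩ := diag_entries hc
    rw [h2, ← h3]
  have hudvd : ∀ m : ℕ, u ^ m = 1 → 2 * r ∣ m := fun m hm =>
    hη.dvd_of_pow_eq_one m (huent m hm)
  have ht2 : t ^ (2 : ℕ) ≠ 1 := fun h => hζsq (hzent 2 h)
  have huinj : ∀ a b : ℕ, a < 2 * r → b < 2 * r → u ^ a = u ^ b → a = b := by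
    have key : ∀ a b : ℕ, a ≤ b → b < 2 * r → u ^ a = u ^ b → a = b := by
      intro a b hab hb he
      have h0 : u ^ a * u ^ (b - a) = u ^ a * 1 := by
        rw [mul_one, ← pow_add, he]
        congr 1
        omega
      have h2 : u ^ (b - a) = 1 := mul_left_cancel h0
      have h3 := hudvd _ h2
      have h4 : b - a = 0 := Nat.eq_zero_of_dvd_of_lt h3 (by omega)
      omega
    intro a b ha hb he
    rcases le_total a b with h | h
    · exact key a b h hb he
    · exact (key b a h ha he.symm).symm
  -- membership of generators
  have hsmemN : s ∈ Subgroup.closure {s, u} := Subgroup.subset_closure (by simp)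
  have humemN : u ∈ Subgroup.closure {s, u} := Subgroup.subset_closure (by simp)
  have htH : t ∈ H' := ⟨1, Or.inl (zpow_one t).symm⟩
  have hsH : s ∈ H' := ⟨0, Or.inr (by rw [zpow_zero, one_mul])⟩
  -- the containment N ≤ normalizer H
  have hconjmem : ∀ g : PGL2 K, (∀ h ∈ H', g * h * g⁻¹ ∈ H') →
      (∀ h ∈ H', g⁻¹ * h * g ∈ H') → g ∈ Subgroup.normalizer (H' : Set (PGL2 K)) := by
    intro g h1 h2
    rw [Subgroup.mem_normalizer_iff]
    intro h
    constructor
    · exact h1 h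
    · intro hh
      have h3 := h2 _ hh
      have h4 : g⁻¹ * (g * h * g⁻¹) * g = h := by group
      rwa [h4] at h3
  have hconj_s : ∀ h ∈ H', s * h * s⁻¹ ∈ H' := by
    rintro h ⟨k, rfl | rfl⟩
    · refine ⟨-k, Or.inl ?_⟩
      calc s * t ^ k * s⁻¹ = t ^ (-k) * s * s := by
            rw [inv_eq_self hs2, semi hs2 hsts k]
        _ = t ^ (-k) := by rw [mul_assoc, hs2, mul_one]
    · refine ⟨-k, Or.inr ?_⟩
      calc s * (t ^ k * s) * s⁻¹ = s * t ^ k * (s * s⁻¹) := by group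
        _ = s * t ^ k := by rw [mul_inv_cancel, mul_one]
        _ = t ^ (-k) * s := semi hs2 hsts k
  have hcommC : Commute u t := by
    rw [htu]; exact (Commute.refl u).mul_right (Commute.refl u)
  have hcomm_ut : ∀ k : ℤ, u * t ^ k = t ^ k * u := fun k => (hcommC.zpow_right k).eq
  have hcomm_ut' : ∀ k : ℤ, u⁻¹ * t ^ k = t ^ k * u⁻¹ := fun k =>
    ((hcommC.zpow_right k).inv_left).eq
  have hsu_eq : s * u = u⁻¹ * s := by
    have h2 : s * u * (s * s) = u⁻¹ * s := by rw [← mul_assoc, hsus]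
    simpa [hs2] using h2
  have husu : u * s * u⁻¹ = t * s := by
    have h1 : u * s = s * u⁻¹ := by
      have h2 := congrArg (fun x => u * x * u⁻¹) hsu_eq
      simpa [mul_assoc] using h2
    calc u * s * u⁻¹ = s * u⁻¹ * u⁻¹ := by rw [h1]
      _ = s * t⁻¹ := by rw [htu, _root_.mul_inv_rev, mul_assoc]
      _ = t * s := by
          have h3 := semi hs2 hsts (-1)
          simpa using h3
  have huisu : u⁻¹ * s * u = t⁻¹ * s := by
    calc u⁻¹ * s * u = u⁻¹ * (s * u) := by rw [mul_assoc]
      _ = u⁻¹ * (u⁻¹ * s) := by rw [hsu_eq]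
      _ = t⁻¹ * s := by rw [htu, _root_.mul_inv_rev, ← mul_assoc]
  have hconj_u : ∀ h ∈ H', u * h * u⁻¹ ∈ H' := by
    rintro h ⟨k, rfl | rfl⟩
    · refine ⟨k, Or.inl ?_⟩
      rw [hcomm_ut k, mul_assoc, mul_inv_cancel, mul_one]
    · refine ⟨k + 1, Or.inr ?_⟩
      calc u * (t ^ k * s) * u⁻¹ = u * t ^ k * (s * u⁻¹) := by group
        _ = t ^ k * u * (s * u⁻¹) := by rw [hcomm_ut k]
        _ = t ^ k * (u * s * u⁻¹) := by group
        _ = t ^ k * (t * s) := by rw [husu]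
        _ = t ^ (k + 1) * s := by rw [_root_.zpow_add, zpow_one]; group
  have hconj_u' : ∀ h ∈ H', u⁻¹ * h * u ∈ H' := by
    rintro h ⟨k, rfl | rfl⟩
    · refine ⟨k, Or.inl ?_⟩
      rw [mul_assoc, ← hcomm_ut k, inv_mul_cancel_left]
    · refine ⟨k - 1, Or.inr ?_⟩
      calc u⁻¹ * (t ^ k * s) * u = u⁻¹ * t ^ k * (s * u) := by group
        _ = t ^ k * u⁻¹ * (s * u) := by rw [hcomm_ut' k]
        _ = t ^ k * (u⁻¹ * s * u) := by group
        _ = t ^ k * (t⁻¹ * s) := by rw [huisu]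
        _ = t ^ (k - 1) * s := by
            rw [sub_eq_add_neg, _root_.zpow_add, _root_.zpow_neg, zpow_one]; group
  have hge : Subgroup.closure {s, u} ≤ Subgroup.normalizer (H' : Set (PGL2 K)) := by
    rw [Subgroup.closure_le]
    intro x hx
    rcases hx with hx | hx
    · rw [hx]
      refine hconjmem s hconj_s ?_
      intro h hh
      have h1 := hconj_s h hh
      rw [inv_eq_self hs2] at h1 ⊢
      exact h1
    · rw [Set.mem_singleton_iff] at hx
      rw [hx]
      exact hconjmem u hconj_u (by
        intro h hh
        have h1 := hconj_u' h hh
        exact h1)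
  -- helper: extract matrix equation from conjugation identity in PGL2
  have mkconj : ∀ A B : GL (Fin 2) K, (QuotientGroup.mk (A * B * A⁻¹) : PGL2 K)
      = QuotientGroup.mk A * QuotientGroup.mk B * (QuotientGroup.mk A)⁻¹ := by
    intro A B
    rw [QuotientGroup.mk_mul, QuotientGroup.mk_mul, QuotientGroup.mk_inv]
  have conj_eq : ∀ A B C : GL (Fin 2) K,
      (QuotientGroup.mk (A * B * A⁻¹) : PGL2 K) = QuotientGroup.mk C →
      ∃ c : K, (C : Matrix (Fin 2) (Fin 2) K) * (A : Matrix (Fin 2) (Fin 2) K)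
        = c • ((A : Matrix (Fin 2) (Fin 2) K) * (B : Matrix (Fin 2) (Fin 2) K)) := by
    intro A B C h
    obtain ⟨c, hc⟩ := mk_eq_mk.mp h
    refine ⟨c, ?_⟩
    have h1 : ((A * B * A⁻¹ : GL (Fin 2) K) : Matrix (Fin 2) (Fin 2) K)
        * (A : Matrix (Fin 2) (Fin 2) K)
        = (A : Matrix (Fin 2) (Fin 2) K) * (B : Matrix (Fin 2) (Fin 2) K) := by
      show (A : Matrix (Fin 2) (Fin 2) K) * (B : Matrix (Fin 2) (Fin 2) K)
        * ((A⁻¹ : GL (Fin 2) K) : Matrix (Fin 2) (Fin 2) K)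
        * (A : Matrix (Fin 2) (Fin 2) K) = _
      rw [mul_assoc ((A : Matrix (Fin 2) (Fin 2) K) * (B : Matrix (Fin 2) (Fin 2) K)),
        Units.inv_mul, mul_one]
    rw [hc, smul_mul_assoc, h1]
  -- the diagonal representative argument
  have diagArg : ∀ (N : GL (Fin 2) K) (x y : K), x ≠ 0 → y ≠ 0 →
      (N : Matrix (Fin 2) (Fin 2) K) = !![x, 0; 0, y] →
      (QuotientGroup.mk N : PGL2 K) ∈ Subgroup.normalizer (H' : Set (PGL2 K)) →
      (QuotientGroup.mk N : PGL2 K) ∈ Subgroup.closure {s, u} := by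
    intro N x y hx hy hN hNnorm
    have hgs := (Subgroup.mem_normalizer_iff.mp hNnorm s).mp hsH
    obtain ⟨k', hk' | hk'⟩ := hgs
    · exfalso
      rw [zpow_reduce hr0 htr k'] at hk'
      set m' : ℕ := ((k' % (r : ℤ)).toNat) with hm'
      obtain ⟨c₁, hc1⟩ := conj_eq N S (Tζ ^ m') (by
        rw [mkconj, ← hs_def, mkpow, ← ht_def]
        exact hk')
      rw [hTζpow, hN, hS'] at hc1
      have e := congrFun (congrFun hc1 0) 0
      simp [Matrix.mul_apply, Fin.sum_univ_two] at e
      rcases e with e | e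
      · exact hζ0 e.1
      · exact hx e
    · rw [zpow_reduce hr0 htr k'] at hk'
      set m' : ℕ := ((k' % (r : ℤ)).toNat) with hm'
      obtain ⟨c₁, hc1⟩ := conj_eq N S (Tζ ^ m' * S) (by
        rw [mkconj, ← hs_def, QuotientGroup.mk_mul, mkpow, ← ht_def, ← hs_def]
        exact hk')
      rw [Units.val_mul, hTζpow, hN, hS'] at hc1
      have e01 := congrFun (congrFun hc1 0) 1
      have e10 := congrFun (congrFun hc1 1) 0
      simp [Matrix.mul_apply, Fin.sum_univ_two] at e01 e10
      -- e01 : ζ ^ m' * y = c₁ * x ;  e10 : x = c₁ * y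
      have hx2 : x * x = ζ ^ m' * (y * y) := by linear_combination x * e10 - y * e01
      have hημ : η ^ m' * η ^ m' = ζ ^ m' := by
        calc η ^ m' * η ^ m' = η ^ (m' + m') := (pow_add η m' m').symm
          _ = (η ^ 2) ^ m' := by rw [← pow_mul]; congr 1; ring
          _ = ζ ^ m' := by rw [hηζ]
      have hfac : (x - η ^ m' * y) * (x + η ^ m' * y) = 0 := by
        linear_combination hx2 - y * y * hημ
      have hxy : ∃ p : ℕ, x = η ^ p * y := by
        rcases mul_eq_zero.mp hfac with h | h
        · exact ⟨m', by linear_combination h⟩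
        · refine ⟨m' + r, ?_⟩
          have h9 : η ^ (m' + r) = -η ^ m' := by rw [pow_add, hηr]; ring
          rw [h9]; linear_combination h
      obtain ⟨p, hp⟩ := hxy
      have hNu : (QuotientGroup.mk N : PGL2 K) = u ^ p := by
        rw [hu_def, ← mkpow]
        refine mk_eq_mk.mpr ⟨y⁻¹, ?_⟩
        rw [hTηpow, hN, hp]
        ext i j
        fin_cases i <;> fin_cases j <;>
          simp <;> field_simp
      rw [hNu]
      exact pow_mem humemN p
  -- the hard inclusion
  have hle : Subgroup.normalizer (H' : Set (PGL2 K)) ≤ Subgroup.closure {s, u} := by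
    intro g hg
    have hgt := (Subgroup.mem_normalizer_iff.mp hg t).mp htH
    obtain ⟨M, hM⟩ := QuotientGroup.mk_surjective g
    obtain ⟨k, hk | hk⟩ := hgt
    · -- g t g⁻¹ = t ^ k : analyze the matrix of M
      rw [zpow_reduce hr0 htr k] at hk
      set m : ℕ := ((k % (r : ℤ)).toNat) with hm
      obtain ⟨c₀, hc⟩ := conj_eq M Tζ (Tζ ^ m) (by
        rw [mkconj, hM, mkpow, ← ht_def]
        exact hk)
      rw [hTζpow, hTζ'] at hc
      set a := (M : Matrix (Fin 2) (Fin 2) K) 0 0 with ha_def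
      set b := (M : Matrix (Fin 2) (Fin 2) K) 0 1 with hb_def
      set cc := (M : Matrix (Fin 2) (Fin 2) K) 1 0 with hcc_def
      set d := (M : Matrix (Fin 2) (Fin 2) K) 1 1 with hd_def
      have e00 := congrFun (congrFun hc 0) 0
      have e01 := congrFun (congrFun hc 0) 1
      have e10 := congrFun (congrFun hc 1) 0
      have e11 := congrFun (congrFun hc 1) 1
      simp [Matrix.mul_apply, Fin.sum_univ_two, ← ha_def, ← hb_def, ← hcc_def,
        ← hd_def] at e00 e01 e10 e11
      have hdet : a * d - b * cc ≠ 0 := by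
        have h1 : IsUnit ((M : Matrix (Fin 2) (Fin 2) K).det) :=
          (Matrix.isUnit_iff_isUnit_det _).mp M.isUnit
        have h3 := h1.ne_zero
        rwa [Matrix.det_fin_two] at h3
      have hζm : ζ ^ m ≠ 0 := pow_ne_zero _ hζ0
      have hMeta : (M : Matrix (Fin 2) (Fin 2) K) = !![a, b; cc, d] :=
        Matrix.eta_fin_two _
      have hkey : (b = 0 ∧ cc = 0) ∨ (a = 0 ∧ d = 0) := by
        rcases eq_or_ne b 0 with hb | hb
        · rcases eq_or_ne cc 0 with hcc | hcc
          · exact Or.inl ⟨hb, hcc⟩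
          · exfalso
            have h4 : c₀ * ζ = 1 := mul_left_cancel₀ hcc (by linear_combination -e10)
            have hc1 : c₀ ≠ 1 := fun h => hζ1 (by rw [h, one_mul] at h4; exact h4)
            have hd : d = 0 := by
              by_contra hd
              exact hc1 (mul_left_cancel₀ hd (by linear_combination -e11))
            exact hdet (by rw [hb, hd]; ring)
        · have hcm : ζ ^ m = c₀ := e01.resolve_right hb
          rcases eq_or_ne cc 0 with hcc | hcc
          · exfalso
            have ha : a = 0 := by
              by_contra ha
              apply hζ1
              have h5 : (ζ ^ m * a) * ζ = (ζ ^ m * a) * 1 := by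
                linear_combination a * ζ * hcm - e00
              exact mul_left_cancel₀ (mul_ne_zero hζm ha) h5
            exact hdet (by rw [ha, hcc]; ring)
          · have h4 : c₀ * ζ = 1 := mul_left_cancel₀ hcc (by linear_combination -e10)
            have hc1 : c₀ ≠ 1 := fun h => hζ1 (by rw [h, one_mul] at h4; exact h4)
            have hd : d = 0 := by
              by_contra hd
              exact hc1 (mul_left_cancel₀ hd (by linear_combination -e11))
            have ha : a = 0 := by
              by_contra ha
              refine hc1 (mul_left_cancel₀ ha ?_)
              linear_combination -a * hcm + e00 + a * h4
            exact Or.inr ⟨ha, hd⟩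
      rcases hkey with ⟨hb, hcc⟩ | ⟨ha, hd⟩
      · have hane : a ≠ 0 := fun h => hdet (by rw [h, hb]; ring)
        have hdne : d ≠ 0 := fun h => hdet (by rw [h, hb]; ring)
        rw [← hM]
        exact diagArg M a d hane hdne (by rw [hMeta, hb, hcc]) (by rw [hM]; exact hg)
      · have hbne : b ≠ 0 := fun h => hdet (by rw [h, ha]; ring)
        have hccne : cc ≠ 0 := fun h => hdet (by rw [h, ha]; ring)
        have hSM : ((S * M : GL (Fin 2) K) : Matrix (Fin 2) (Fin 2) K)
            = !![cc, 0; 0, b] := by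
          rw [Units.val_mul, hS', hMeta, ha, hd, Matrix.mul_fin_two]
          norm_num
        have hSMnorm : (QuotientGroup.mk (S * M) : PGL2 K) ∈ Subgroup.normalizer (H' : Set (PGL2 K)) := by
          rw [QuotientGroup.mk_mul, ← hs_def, hM]
          exact Subgroup.mul_mem _ (hge hsmemN) hg
        have hSMmem := diagArg (S * M) cc b hccne hbne hSM hSMnorm
        have hgdec : g = s * (QuotientGroup.mk (S * M) : PGL2 K) := by
          rw [hs_def, ← QuotientGroup.mk_mul, ← mul_assoc, hSS, one_mul, hM]
        rw [hgdec]
        exact Subgroup.mul_mem _ hsmemN hSMmem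
    · -- g t g⁻¹ = t ^ k * s : impossible
      exfalso
      have hsq : g * t ^ (2 : ℕ) * g⁻¹ = 1 := by
        have h1 : (g * t * g⁻¹) * (g * t * g⁻¹) = g * t ^ (2 : ℕ) * g⁻¹ := by rw [pow_two]; group
        rw [hk] at h1
        rw [← h1]
        calc t ^ k * s * (t ^ k * s) = t ^ k * (s * t ^ k) * s := by group
          _ = t ^ k * (t ^ (-k) * s) * s := by rw [semi hs2 hsts k]
          _ = t ^ k * t ^ (-k) * (s * s) := by group
          _ = 1 := by rw [hs2, ← _root_.zpow_add, add_neg_cancel, zpow_zero, mul_one]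
      have ht2' : t ^ (2 : ℕ) = 1 := by
        have h2 : t ^ (2 : ℕ) = g⁻¹ * (g * t ^ (2 : ℕ) * g⁻¹) * g := by group
        rw [h2, hsq, mul_one, inv_mul_cancel]
      exact ht2 ht2'
  constructor
  · rw [hclosH]
    exact le_antisymm hle hge
  · -- the dihedral group structure
    haveI : NeZero (2 * r) := ⟨h2r0⟩
    haveI : Fact (1 < 2 * r) := ⟨by omega⟩
    have hpowmod : ∀ x : ℕ, u ^ (x % (2 * r)) = u ^ x := by
      intro x
      conv_rhs => rw [← Nat.div_add_mod x (2 * r)]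
      rw [pow_add, pow_mul, hu2r, one_pow, one_mul]
    have key1 : ∀ i j : ZMod (2 * r), u ^ (i + j).val = u ^ i.val * u ^ j.val := by
      intro i j
      rw [ZMod.val_add, hpowmod, pow_add]
    have keyneg : ∀ i : ZMod (2 * r), u ^ ((-i).val) = (u ^ i.val)⁻¹ := by
      intro i
      have h1 : u ^ ((-i).val) * u ^ i.val = 1 := by
        rw [← key1, neg_add_cancel, ZMod.val_zero, pow_zero]
      exact eq_inv_of_mul_eq_one_left h1
    have hscj : ∀ n : ℕ, SemiconjBy s (u ^ n) ((u ^ n)⁻¹) := by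
      intro n
      have h1 : SemiconjBy s u u⁻¹ := hsu_eq
      simpa [inv_pow] using h1.pow_right n
    have key2 : ∀ n : ℕ, s * u ^ n = (u ^ n)⁻¹ * s := fun n => hscj n
    have key3 : ∀ n : ℕ, u ^ n * s = s * (u ^ n)⁻¹ := by
      intro n
      have h1 := (hscj n).inv_right
      simp only [inv_inv] at h1
      exact h1.eq.symm
    let f : DihedralGroup (2 * r) → PGL2 K := fun x =>
      match x with
      | .r i => u ^ i.val
      | .sr i => s * u ^ i.val
    have hmul : ∀ x y : DihedralGroup (2 * r), f (x * y) = f x * f y := by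
      rintro (i | i) (j | j)
      · show u ^ (i + j).val = u ^ i.val * u ^ j.val
        exact key1 i j
      · show s * u ^ (j - i).val = u ^ i.val * (s * u ^ j.val)
        rw [← mul_assoc, key3, mul_assoc, ← keyneg i, ← key1, sub_eq_neg_add]
      · show s * u ^ (i + j).val = s * u ^ i.val * u ^ j.val
        rw [key1, mul_assoc]
      · show u ^ (j - i).val = s * u ^ i.val * (s * u ^ j.val)
        rw [sub_eq_neg_add]
        calc u ^ (-i + j).val = u ^ ((-i).val) * u ^ j.val := key1 _ _
          _ = (u ^ i.val)⁻¹ * u ^ j.val := by rw [keyneg]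
          _ = (s * s) * ((u ^ i.val)⁻¹ * u ^ j.val) := by rw [hs2, one_mul]
          _ = s * (s * (u ^ i.val)⁻¹) * u ^ j.val := by group
          _ = s * (u ^ i.val * s) * u ^ j.val := by rw [key3]
          _ = s * u ^ i.val * (s * u ^ j.val) := by group
    let F : DihedralGroup (2 * r) →* PGL2 K := MonoidHom.mk' f hmul
    have hnotds : ∀ a b : ℕ, u ^ a ≠ s * u ^ b := by
      intro a b hab
      have h2 : (QuotientGroup.mk (S * Tη ^ b) : PGL2 K) = QuotientGroup.mk (Tη ^ a) := by
        rw [QuotientGroup.mk_mul, mkpow, mkpow, ← hs_def, ← hu_def]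
        exact hab.symm
      obtain ⟨c, hc⟩ := mk_eq_mk.mp h2
      rw [hTηpow] at hc
      have hSb : ((S * Tη ^ b : GL (Fin 2) K) : Matrix (Fin 2) (Fin 2) K)
          = !![0, 1; η ^ b, 0] := by
        rw [Units.val_mul, hS', hTηpow, Matrix.mul_fin_two]
        norm_num
      rw [hSb] at hc
      have e := congrFun (congrFun hc 0) 0
      have e' : η ^ a = (0 : K) := by simpa using e
      exact pow_ne_zero a hη0 e'
    have hFinj : Function.Injective F := by
      intro x y hxy
      have hval : ∀ i : ZMod (2 * r), i.val < 2 * r := fun i => ZMod.val_lt i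
      cases x with
      | r i =>
        cases y with
        | r j =>
          have h1 : u ^ i.val = u ^ j.val := hxy
          exact congrArg DihedralGroup.r
            (ZMod.val_injective _ (huinj _ _ (hval i) (hval j) h1))
        | sr j =>
          exact absurd (show u ^ i.val = s * u ^ j.val from hxy) (hnotds _ _)
      | sr i =>
        cases y with
        | r j =>
          exact absurd (show u ^ j.val = s * u ^ i.val from hxy.symm) (hnotds _ _)
        | sr j =>
          have h1 : s * u ^ i.val = s * u ^ j.val := hxy
          have h2 : u ^ i.val = u ^ j.val := mul_left_cancel h1
          exact congrArg DihedralGroup.sr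
            (ZMod.val_injective _ (huinj _ _ (hval i) (hval j) h2))
    have hrange : F.range = Subgroup.closure {s, u} := by
      apply le_antisymm
      · rintro x ⟨y, rfl⟩
        cases y with
        | r i => exact pow_mem humemN _
        | sr i => exact Subgroup.mul_mem _ hsmemN (pow_mem humemN _)
      · rw [Subgroup.closure_le]
        intro x hx
        rcases hx with hx | hx
        · refine ⟨DihedralGroup.sr 0, ?_⟩
          show s * u ^ (0 : ZMod (2 * r)).val = x
          rw [ZMod.val_zero, pow_zero, mul_one, hx]
        · rw [Set.mem_singleton_iff] at hx
          refine ⟨DihedralGroup.r 1, ?_⟩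
          show u ^ (1 : ZMod (2 * r)).val = x
          rw [ZMod.val_one, pow_one, hx]
    exact ⟨(MulEquiv.subgroupCongr hrange.symm).trans (MonoidHom.ofInjective hFinj).symm⟩
end
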